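/- arXiv:1209.4970 — 6 statements merged into one kernel-verified Lean document; each statement's English description precedes it below -/
import Mathlib

section
/- Let N > 1 and let Z : [0,2π] → ℝ be a twice continuously differentiable finite phase response curve satisfying Z'(θ) > −1 for all θ ∈ (0,2π), Z'(θ) < 0 for all θ ∈ (0,2π), and either Z''(θ) > 0 for all θ ∈ (0,2π) or Z''(θ) < 0 for all θ ∈ (0,2π). Then the (N−1)-dimensional firing map H is contracting with respect to the 1-norm on the cone C_N: for all x, y ∈ C_N with x ≠ y such that H(x) and H(y) are defined, ‖H(x) − H(y)‖ < ‖x − y‖. -/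
open Real Set

/-- The scalar firing map `h(θ) = 2π − θ + Z(2π − θ)`. -/
noncomputable def firingScalar (Z : ℝ → ℝ) (θ : ℝ) : ℝ :=
  2 * π - θ + Z (2 * π - θ)

/-- The `(N−1)`-dimensional firing map
`H(θ₁,…,θ_{N−1}) = (h(θ_{N−1}), h(θ_{N−1}−θ₁), …, h(θ_{N−1}−θ_{N−2}))`
(here `m = N − 1` and indices are zero-based). -/
noncomputable def firingMap (Z : ℝ → ℝ) {m : ℕ} (x : Fin m → ℝ) : Fin m → ℝ :=
  fun i =>
    firingScalar Z
      (x ⟨m - 1, Nat.sub_lt i.pos Nat.one_pos⟩ -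
        if h : (i : ℕ) = 0 then 0
        else x ⟨(i : ℕ) - 1, Nat.lt_of_le_of_lt (Nat.sub_le _ _) i.isLt⟩)

/-- The open cone `C_N = {θ ∈ ℝ^{N−1} : 0 < θ₁ < θ₂ < ⋯ < θ_{N−1} < 2π}`. -/
def firingCone {m : ℕ} : Set (Fin m → ℝ) :=
  {x | (∀ i, 0 < x i) ∧ StrictMono x ∧ ∀ i, x i < 2 * π}

/-- The 1-norm `‖θ‖ = |θ₁| + Σ_{k=1}^{N−2} |θ_k − θ_{k+1}| + |θ_{N−1}|`. -/
noncomputable def norm1 {m : ℕ} (x : Fin m → ℝ) : ℝ :=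
  (if h : 0 < m then
      |x ⟨0, h⟩| + |x ⟨m - 1, Nat.sub_lt h Nat.one_pos⟩|
    else 0) +
  ∑ k : Fin (m - 1),
    |x ⟨(k : ℕ), Nat.lt_of_lt_of_le k.isLt (Nat.sub_le m 1)⟩ -
      x ⟨(k : ℕ) + 1, Nat.add_lt_of_lt_sub k.isLt⟩|


section FiringAux

/-- total variation of the first `n` steps of a sequence -/
noncomputable def tv (n : ℕ) (u : ℕ → ℝ) : ℝ := ∑ k ∈ Finset.range n, |u (k+1) - u k|

lemma tv_nonneg (n : ℕ) (u : ℕ → ℝ) : 0 ≤ tv n u :=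
  Finset.sum_nonneg fun _ _ => abs_nonneg _

lemma tv_congr (n : ℕ) (u v : ℕ → ℝ) (h : ∀ k ≤ n, u k = v k) : tv n u = tv n v := by
  unfold tv
  refine Finset.sum_congr rfl fun k hk => ?_
  rw [Finset.mem_range] at hk
  rw [h k (le_of_lt hk), h (k+1) hk]

lemma tv_sub_le (n : ℕ) (u v : ℕ → ℝ) : tv n (fun k => u k - v k) ≤ tv n u + tv n v := by
  unfold tv
  rw [← Finset.sum_add_distrib]
  refine Finset.sum_le_sum fun k _ => ?_
  have : u (k+1) - v (k+1) - (u k - v k) = (u (k+1) - u k) - (v (k+1) - v k) := by ring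
  rw [this]
  exact abs_sub _ _

lemma tv_smul (n : ℕ) (c : ℝ) (u : ℕ → ℝ) : tv n (fun k => c * u k) = |c| * tv n u := by
  unfold tv
  rw [Finset.mul_sum]
  refine Finset.sum_congr rfl fun k _ => ?_
  rw [← abs_mul]; ring_nf

lemma tv_sum_le {ι : Type*} (s : Finset ι) (n : ℕ) (f : ι → ℕ → ℝ) :
    tv n (fun k => ∑ j ∈ s, f j k) ≤ ∑ j ∈ s, tv n (f j) := by
  unfold tv
  rw [Finset.sum_comm]
  refine Finset.sum_le_sum fun k _ => ?_
  rw [← Finset.sum_sub_distrib]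
  exact Finset.abs_sum_le_sum_abs _ _

lemma tv_eq_zero_imp (n : ℕ) (u : ℕ → ℝ) (h : tv n u = 0) : ∀ k ≤ n, u k = u 0 := by
  intro k hk
  induction k with
  | zero => rfl
  | succ j ih =>
    have h1 : ∀ i ∈ Finset.range n, |u (i+1) - u i| = 0 :=
      (Finset.sum_eq_zero_iff_of_nonneg (fun i _ => abs_nonneg (u (i+1) - u i))).1 h
    have hj : u (j+1) - u j = 0 := abs_eq_zero.1 (h1 j (Finset.mem_range.2 hk))
    have := ih (Nat.le_of_succ_le hk)
    linarith


/-- carry-forward sign sequence for ψ: `sgn ψ k` is the sign of the step `k → k+1`. -/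
noncomputable def sgn (ψ : ℕ → ℝ) : ℕ → ℝ
  | 0 => if ψ 1 < ψ 0 then -1 else 1
  | (k+1) => if ψ (k+2) < ψ (k+1) then -1 else if ψ (k+1) < ψ (k+2) then 1 else sgn ψ k

lemma sgn_pm (ψ : ℕ → ℝ) : ∀ k, sgn ψ k = 1 ∨ sgn ψ k = -1 := by
  intro k
  induction k with
  | zero => unfold sgn; split <;> simp
  | succ j ih => unfold sgn; split; · simp
                 split; · simp
                 exact ih

lemma sgn_mul (ψ : ℕ → ℝ) : ∀ k, sgn ψ k * (ψ (k+1) - ψ k) = |ψ (k+1) - ψ k| := by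
  intro k
  cases k with
  | zero =>
    unfold sgn
    rcases lt_trichotomy (ψ 1) (ψ 0) with h | h | h
    · rw [if_pos h, abs_of_neg (by linarith)]; ring
    · rw [h]; simp
    · rw [if_neg (by linarith), abs_of_pos (by linarith)]; ring
  | succ j =>
    show sgn ψ (j+1) * _ = _
    unfold sgn
    rcases lt_trichotomy (ψ (j+2)) (ψ (j+1)) with h | h | h
    · rw [if_pos h, abs_of_neg (by linarith)]; ring
    · rw [if_neg (by linarith), if_neg (by linarith), h]
      simp
    · rw [if_neg (by linarith), if_pos h, abs_of_pos (by linarith)]; ring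

lemma sgn_flip (ψ : ℕ → ℝ) (k : ℕ) (h : sgn ψ (k+1) ≠ sgn ψ k) :
    (sgn ψ (k+1) = -1 ∧ ψ (k+2) < ψ (k+1)) ∨ (sgn ψ (k+1) = 1 ∧ ψ (k+1) < ψ (k+2)) := by
  have : sgn ψ (k+1) = if ψ (k+2) < ψ (k+1) then -1 else if ψ (k+1) < ψ (k+2) then 1 else sgn ψ k := rfl
  rcases lt_trichotomy (ψ (k+2)) (ψ (k+1)) with h1 | h1 | h1
  · left; exact ⟨by rw [this, if_pos h1], h1⟩
  · exfalso; apply h; rw [this, if_neg (by linarith), if_neg (by linarith)]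
  · right; exact ⟨by rw [this, if_neg (by linarith), if_pos h1], h1⟩

/-- Key abstract comparison lemma: the dual/sign argument. -/
lemma tv_le_of_flip (n : ℕ) (hn : 1 ≤ n) (ψ δ : ℕ → ℝ)
    (h0 : ψ 0 = δ 0) (hend : ψ n = δ n)
    (H1 : ∀ j, 1 ≤ j → j + 1 ≤ n → ψ (j+1) < ψ j → ψ j ≤ δ j)
    (H2 : ∀ j, 1 ≤ j → j + 1 ≤ n → ψ j < ψ (j+1) → δ j ≤ ψ j) :
    tv n ψ ≤ tv n δ := by
  obtain ⟨nn, rfl⟩ : ∃ nn, n = nn + 1 := ⟨n - 1, (Nat.succ_pred_eq_of_pos hn).symm⟩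
  let s : ℕ → ℝ := sgn ψ
  have hs : ∀ k, s k = sgn ψ k := fun k => rfl
  set r : ℕ → ℝ := fun k => δ k - ψ k with hr
  have habs : ∀ k, |s k| = 1 := by
    intro k; rw [hs k]; rcases sgn_pm ψ k with h | h <;> rw [h] <;> simp
  -- tv ψ as signed sum
  have e1 : tv (nn+1) ψ = ∑ k ∈ Finset.range (nn+1), s k * (ψ (k+1) - ψ k) := by
    unfold tv; exact (Finset.sum_congr rfl fun k _ => (sgn_mul ψ k).symm)
  -- signed sum of δ-increments is at most tv δ
  have e2 : ∑ k ∈ Finset.range (nn+1), s k * (δ (k+1) - δ k) ≤ tv (nn+1) δ := by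
    unfold tv
    refine Finset.sum_le_sum fun k _ => ?_
    calc s k * (δ (k+1) - δ k) ≤ |s k * (δ (k+1) - δ k)| := le_abs_self _
      _ = |δ (k+1) - δ k| := by rw [abs_mul, habs k, one_mul]
  -- the correction term is nonnegative
  have e3 : 0 ≤ ∑ k ∈ Finset.range (nn+1), s k * (r (k+1) - r k) := by
    have r0 : r 0 = 0 := by simp [hr, h0]
    have rn : r (nn+1) = 0 := by simp [hr, hend]
    have abel : ∑ k ∈ Finset.range (nn+1), s k * (r (k+1) - r k)
        = (∑ k ∈ Finset.range nn, (s k - s (k+1)) * r (k+1)) + s nn * r (nn+1) - s 0 * r 0 := by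
      have l1 : ∑ k ∈ Finset.range (nn+1), s k * r (k+1)
          = (∑ k ∈ Finset.range nn, s k * r (k+1)) + s nn * r (nn+1) := Finset.sum_range_succ _ nn
      have l2 : ∑ k ∈ Finset.range (nn+1), s k * r k
          = (∑ k ∈ Finset.range nn, s (k+1) * r (k+1)) + s 0 * r 0 := Finset.sum_range_succ' _ nn
      have e : ∑ k ∈ Finset.range (nn+1), s k * (r (k+1) - r k)
          = (∑ k ∈ Finset.range (nn+1), s k * r (k+1)) - ∑ k ∈ Finset.range (nn+1), s k * r k := by
        rw [← Finset.sum_sub_distrib]; exact Finset.sum_congr rfl fun k _ => by ring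
      have l3 : (∑ k ∈ Finset.range nn, s k * r (k+1)) - ∑ k ∈ Finset.range nn, s (k+1) * r (k+1)
          = ∑ k ∈ Finset.range nn, (s k - s (k+1)) * r (k+1) := by
        rw [← Finset.sum_sub_distrib]; exact Finset.sum_congr rfl fun k _ => by ring
      rw [e, l1, l2, ← l3]; ring
    rw [abel, r0, rn]
    simp only [mul_zero, zero_mul, add_zero, sub_zero]
    refine Finset.sum_nonneg fun k hk => ?_
    rw [Finset.mem_range] at hk
    show 0 ≤ (sgn ψ k - sgn ψ (k+1)) * r (k+1)
    by_cases hflip : sgn ψ (k+1) = sgn ψ k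
    · rw [hflip]; simp
    · rcases sgn_flip ψ k hflip with ⟨hsk, hlt⟩ | ⟨hsk, hlt⟩
      · have hsk' : sgn ψ k = 1 := by
          rcases sgn_pm ψ k with h | h; · exact h
          · exact absurd (hsk.trans h.symm) hflip
        have hrpos : 0 ≤ r (k+1) := by
          have := H1 (k+1) (Nat.le_add_left 1 k) (by omega) hlt
          simp only [hr]; linarith
        rw [hsk', hsk]; nlinarith
      · have hsk' : sgn ψ k = -1 := by
          rcases sgn_pm ψ k with h | h
          · exact absurd (hsk.trans h.symm) hflip
          · exact h
        have hrneg : r (k+1) ≤ 0 := by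
          have := H2 (k+1) (Nat.le_add_left 1 k) (by omega) hlt
          simp only [hr]; linarith
        rw [hsk', hsk]; nlinarith
  have e4 : ∀ k, s k * (ψ (k+1) - ψ k) = s k * (δ (k+1) - δ k) - s k * (r (k+1) - r k) := by
    intro k; simp only [hr]; ring
  rw [e1]
  simp_rw [e4, Finset.sum_sub_distrib]
  linarith

/-- Truncation lemma, `min` version. -/
lemma tv_min_le (n : ℕ) (hn : 1 ≤ n) (P Q : ℕ → ℝ) (hP : Monotone P) (hQ : Monotone Q)
    (h0 : P 0 = Q 0) (hend : P n = Q n) (c : ℝ) :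
    tv n (fun k => min (P k) c - min (Q k) c) ≤ tv n (fun k => P k - Q k) := by
  apply tv_le_of_flip n hn _ _ (by simp [h0]) (by simp [hend])
  · -- down step after j  ⇒  ψ j ≤ δ j, i.e. max (P j) c ≥ max (Q j) c
    intro j _ _ hlt
    by_contra hcon
    push_neg at hcon
    -- hcon : P j - Q j < min (P j) c - min (Q j) c
    have hQc : c < Q j := by
      rcases le_or_gt (Q j) c with h | h
      · rcases le_or_gt (P j) c with h' | h'
        · simp [min_eq_left h, min_eq_left h'] at hcon
        · have : min (P j) c = c := min_eq_right h'.le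
          simp [this, min_eq_left h] at hcon; linarith
      · exact h
    have h1 : min (Q j) c = c := min_eq_right hQc.le
    have h2 : min (Q (j+1)) c = c := min_eq_right ((hQc.trans_le (hQ (Nat.le_succ j))).le)
    have : min (P (j+1)) c - min (Q (j+1)) c < min (P j) c - min (Q j) c := hlt
    rw [h1, h2] at this
    have : min (P (j+1)) c < min (P j) c := by linarith
    exact absurd (le_min (min_le_left _ _ |>.trans (hP (Nat.le_succ j))) (min_le_right _ _) :
      min (P j) c ≤ min (P (j+1)) c) (not_le.2 this)
  · intro j _ _ hlt
    by_contra hcon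
    push_neg at hcon
    have hPc : c < P j := by
      rcases le_or_gt (P j) c with h | h
      · rcases le_or_gt (Q j) c with h' | h'
        · simp [min_eq_left h, min_eq_left h'] at hcon
        · have : min (Q j) c = c := min_eq_right h'.le
          simp [this, min_eq_left h] at hcon; linarith
      · exact h
    have h1 : min (P j) c = c := min_eq_right hPc.le
    have h2 : min (P (j+1)) c = c := min_eq_right ((hPc.trans_le (hP (Nat.le_succ j))).le)
    have : min (P j) c - min (Q j) c < min (P (j+1)) c - min (Q (j+1)) c := hlt
    rw [h1, h2] at this
    have : min (Q (j+1)) c < min (Q j) c := by linarith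
    exact absurd (le_min (min_le_left _ _ |>.trans (hQ (Nat.le_succ j))) (min_le_right _ _) :
      min (Q j) c ≤ min (Q (j+1)) c) (not_le.2 this)

lemma tv_reflect (n : ℕ) (u : ℕ → ℝ) : tv n (fun k => u (n - k)) = tv n u := by
  unfold tv
  rw [← Finset.sum_range_reflect]
  refine Finset.sum_congr rfl fun k hk => ?_
  rw [Finset.mem_range] at hk
  have h1 : n - (n - 1 - k) = k + 1 := by omega
  have h2 : n - (n - 1 - k + 1) = k := by omega
  show |u (n - (n - 1 - k + 1)) - u (n - (n - 1 - k))| = _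
  rw [h1, h2, abs_sub_comm]

/-- Truncation lemma, `max` version; derived from the `min` version by reflection. -/
lemma tv_max_le (n : ℕ) (hn : 1 ≤ n) (P Q : ℕ → ℝ) (hP : Monotone P) (hQ : Monotone Q)
    (h0 : P 0 = Q 0) (hend : P n = Q n) (c : ℝ) :
    tv n (fun k => max (P k) c - max (Q k) c) ≤ tv n (fun k => P k - Q k) := by
  have key := tv_min_le n hn (fun k => -Q (n - k)) (fun k => -P (n - k))
    (fun a b hab => neg_le_neg (hQ (by omega : n - b ≤ n - a)))
    (fun a b hab => neg_le_neg (hP (by omega : n - b ≤ n - a)))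
    (by simp [Nat.sub_zero, hend]) (by simp [h0]) (-c)
  have e1 : (fun k => min (-Q (n-k)) (-c) - min (-P (n-k)) (-c))
      = (fun k => (fun j => max (P j) c - max (Q j) c) (n - k)) := by
    funext k; simp [min_neg_neg]; ring
  have e2 : (fun k => -Q (n-k) - -P (n-k)) = (fun k => (fun j => P j - Q j) (n - k)) := by
    funext k; ring
  rw [e1, e2, tv_reflect n (fun j => max (P j) c - max (Q j) c),
    tv_reflect n (fun j => P j - Q j)] at key
  exact key

lemma tv_add_le (n : ℕ) (u v : ℕ → ℝ) : tv n (fun k => u k + v k) ≤ tv n u + tv n v := by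
  unfold tv
  rw [← Finset.sum_add_distrib]
  refine Finset.sum_le_sum fun k _ => ?_
  have : u (k+1) + v (k+1) - (u k + v k) = (u (k+1) - u k) + (v (k+1) - v k) := by ring
  rw [this]
  exact abs_add_le _ _

lemma tv_decomp (n M : ℕ) (hn : 1 ≤ n) (hM : 1 ≤ M)
    (F : ℝ → ℝ) (P Q X ρ : ℕ → ℝ)
    (hP : Monotone P) (hQ : Monotone Q) (hP0 : P 0 = Q 0) (hPn : P n = Q n)
    (hXm : ∀ i j, i ≤ j → j ≤ M → X i ≤ X j)
    (hPmem : ∀ k, ∃ i, i ≤ M ∧ P k = X i) (hQmem : ∀ k, ∃ i, i ≤ M ∧ Q k = X i)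
    (hslope : ∀ j, j < M → F (X (j+1)) - F (X j) = ρ j * (X (j+1) - X j))
    (hρnn : ∀ j, j < M → 0 ≤ ρ j)
    (hρmono : (∀ i j, i ≤ j → j < M → ρ i ≤ ρ j) ∨ (∀ i j, i ≤ j → j < M → ρ j ≤ ρ i)) :
    tv n (fun k => F (P k) - F (Q k)) ≤ max (ρ 0) (ρ (M-1)) * tv n (fun k => P k - Q k) := by
  obtain ⟨MM, rfl⟩ : ∃ MM, M = MM + 1 := ⟨M - 1, (Nat.succ_pred_eq_of_pos hM).symm⟩
  simp only [Nat.add_sub_cancel]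
  -- the cell-slope identity for grid points
  have cell : ∀ t, (∃ i, i ≤ MM + 1 ∧ t = X i) → ∀ j, j < MM + 1 →
      F (min t (X (j+1))) - F (min t (X j)) = ρ j * (min t (X (j+1)) - min t (X j)) := by
    rintro t ⟨i, hiM, rfl⟩ j hj
    rcases le_or_gt i j with h | h
    · have h1 : X i ≤ X j := hXm i j h (by omega)
      have h2 : X i ≤ X (j+1) := hXm i (j+1) (by omega) (by omega)
      rw [min_eq_left h1, min_eq_left h2]
      simp
    · have h1 : X j ≤ X i := hXm j i (by omega) hiM
      have h2 : X (j+1) ≤ X i := hXm (j+1) i (by omega) hiM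
      rw [min_eq_right h1, min_eq_right h2]
      exact hslope j hj
  -- telescoping: value of F at a grid point
  have tele : ∀ t, (∃ i, i ≤ MM + 1 ∧ t = X i) →
      F t - F (X 0) = ∑ j ∈ Finset.range (MM+1), ρ j * (min t (X (j+1)) - min t (X j)) := by
    intro t ht
    have e1 : ∑ j ∈ Finset.range (MM+1), ρ j * (min t (X (j+1)) - min t (X j))
        = ∑ j ∈ Finset.range (MM+1), (F (min t (X (j+1))) - F (min t (X j))) := by
      refine Finset.sum_congr rfl fun j hj => ?_
      rw [Finset.mem_range] at hj
      exact (cell t ht j hj).symm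
    rw [e1, Finset.sum_range_sub (fun j => F (min t (X j)))]
    obtain ⟨i, hiM, rfl⟩ := ht
    rw [min_eq_left (hXm i (MM+1) hiM le_rfl), min_eq_right (hXm 0 i (Nat.zero_le i) hiM)]
  -- G and G'
  set G : ℕ → ℕ → ℝ := fun j k => min (P k) (X j) - min (Q k) (X j) with hG
  set G' : ℕ → ℕ → ℝ := fun j k => max (P k) (X j) - max (Q k) (X j) with hG'
  have hG0 : ∀ k, G 0 k = 0 := by
    intro k
    obtain ⟨i, hiM, hPe⟩ := hPmem k
    obtain ⟨i', hiM', hQe⟩ := hQmem k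
    simp only [hG, hPe, hQe]
    rw [min_eq_right (hXm 0 i (Nat.zero_le _) hiM), min_eq_right (hXm 0 i' (Nat.zero_le _) hiM')]
    ring
  have hGM : ∀ k, G (MM+1) k = P k - Q k := by
    intro k
    obtain ⟨i, hiM, hPe⟩ := hPmem k
    obtain ⟨i', hiM', hQe⟩ := hQmem k
    simp only [hG, hPe, hQe]
    rw [min_eq_left (hXm i (MM+1) hiM le_rfl), min_eq_left (hXm i' (MM+1) hiM' le_rfl)]
  -- main pointwise identity
  have main : ∀ k, F (P k) - F (Q k)
      = ρ MM * (P k - Q k) + ∑ j ∈ Finset.range MM, (ρ j - ρ (j+1)) * G (j+1) k := by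
    intro k
    have eP := tele (P k) (hPmem k)
    have eQ := tele (Q k) (hQmem k)
    have comb : F (P k) - F (Q k) = ∑ j ∈ Finset.range (MM+1), ρ j * (G (j+1) k - G j k) := by
      have : ∀ j, ρ j * (G (j+1) k - G j k)
          = ρ j * (min (P k) (X (j+1)) - min (P k) (X j))
            - ρ j * (min (Q k) (X (j+1)) - min (Q k) (X j)) := by
        intro j; simp only [hG]; ring
      simp_rw [this, Finset.sum_sub_distrib, ← eP, ← eQ]
      ring
    rw [comb]
    have l1 : ∑ j ∈ Finset.range (MM+1), ρ j * G (j+1) k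
        = (∑ j ∈ Finset.range MM, ρ j * G (j+1) k) + ρ MM * G (MM+1) k := Finset.sum_range_succ _ MM
    have l2 : ∑ j ∈ Finset.range (MM+1), ρ j * G j k
        = (∑ j ∈ Finset.range MM, ρ (j+1) * G (j+1) k) + ρ 0 * G 0 k := Finset.sum_range_succ' _ MM
    have e : ∑ j ∈ Finset.range (MM+1), ρ j * (G (j+1) k - G j k)
        = (∑ j ∈ Finset.range (MM+1), ρ j * G (j+1) k) - ∑ j ∈ Finset.range (MM+1), ρ j * G j k := by
      rw [← Finset.sum_sub_distrib]; exact Finset.sum_congr rfl fun j _ => by ring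
    have l3 : (∑ j ∈ Finset.range MM, ρ j * G (j+1) k) - ∑ j ∈ Finset.range MM, ρ (j+1) * G (j+1) k
        = ∑ j ∈ Finset.range MM, (ρ j - ρ (j+1)) * G (j+1) k := by
      rw [← Finset.sum_sub_distrib]; exact Finset.sum_congr rfl fun j _ => by ring
    rw [e, l1, l2, hG0, hGM, ← l3]
    ring
  rcases hρmono with hmono | hanti
  · -- increasing ρ: rewrite G in terms of G' and δ
    have hGG' : ∀ j k, G j k = (P k - Q k) - G' j k := by
      intro j k
      simp only [hG, hG']
      have e1 : min (P k) (X j) + max (P k) (X j) = P k + X j := min_add_max _ _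
      have e2 : min (Q k) (X j) + max (Q k) (X j) = Q k + X j := min_add_max _ _
      linarith
    have main' : ∀ k, F (P k) - F (Q k)
        = ρ 0 * (P k - Q k) + ∑ j ∈ Finset.range MM, (ρ (j+1) - ρ j) * G' (j+1) k := by
      intro k
      rw [main k]
      simp_rw [hGG']
      have exp : ∀ j, (ρ j - ρ (j+1)) * ((P k - Q k) - G' (j+1) k)
          = (ρ j - ρ (j+1)) * (P k - Q k) + (ρ (j+1) - ρ j) * G' (j+1) k := fun j => by ring
      simp_rw [exp, Finset.sum_add_distrib, ← Finset.sum_mul,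
        Finset.sum_range_sub' (fun j => ρ j) MM]
      ring
    have step : tv n (fun k => F (P k) - F (Q k))
        ≤ ρ 0 * tv n (fun k => P k - Q k)
          + ∑ j ∈ Finset.range MM, (ρ (j+1) - ρ j) * tv n (fun k => P k - Q k) := by
      have e0 : tv n (fun k => F (P k) - F (Q k)) = tv n (fun k =>
          ρ 0 * (P k - Q k) + ∑ j ∈ Finset.range MM, (ρ (j+1) - ρ j) * G' (j+1) k) :=
        tv_congr _ _ _ fun k _ => by rw [main' k]
      rw [e0]
      calc tv n (fun k => ρ 0 * (P k - Q k) + ∑ j ∈ Finset.range MM, (ρ (j+1) - ρ j) * G' (j+1) k)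
          ≤ tv n (fun k => ρ 0 * (P k - Q k))
            + tv n (fun k => ∑ j ∈ Finset.range MM, (ρ (j+1) - ρ j) * G' (j+1) k) := tv_add_le _ _ _
        _ ≤ ρ 0 * tv n (fun k => P k - Q k)
            + ∑ j ∈ Finset.range MM, tv n (fun k => (ρ (j+1) - ρ j) * G' (j+1) k) := by
            have h1 := tv_smul n (ρ 0) (fun k => P k - Q k)
            have h2 := tv_sum_le (Finset.range MM) n (fun j k => (ρ (j+1) - ρ j) * G' (j+1) k)
            rw [abs_of_nonneg (hρnn 0 (by omega))] at h1
            rw [h1] at *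
            exact add_le_add le_rfl h2
        _ ≤ _ := by
            refine add_le_add le_rfl (Finset.sum_le_sum fun j hj => ?_)
            rw [Finset.mem_range] at hj
            have hc : 0 ≤ ρ (j+1) - ρ j := by
              have := hmono j (j+1) (Nat.le_succ j) (by omega); linarith
            rw [tv_smul n _ (fun k => G' (j+1) k), abs_of_nonneg hc]
            refine mul_le_mul_of_nonneg_left ?_ hc
            exact tv_max_le n hn P Q hP hQ hP0 hPn (X (j+1))
    have tsum : ∑ j ∈ Finset.range MM, (ρ (j+1) - ρ j) = ρ MM - ρ 0 :=
      Finset.sum_range_sub (fun j => ρ j) MM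
    rw [← Finset.sum_mul, tsum] at step
    calc tv n (fun k => F (P k) - F (Q k)) ≤ ρ MM * tv n (fun k => P k - Q k) := by linarith
      _ ≤ _ := mul_le_mul_of_nonneg_right (le_max_right _ _) (tv_nonneg _ _)
  · -- decreasing ρ
    have step : tv n (fun k => F (P k) - F (Q k))
        ≤ ρ MM * tv n (fun k => P k - Q k)
          + ∑ j ∈ Finset.range MM, (ρ j - ρ (j+1)) * tv n (fun k => P k - Q k) := by
      have e0 : tv n (fun k => F (P k) - F (Q k)) = tv n (fun k =>
          ρ MM * (P k - Q k) + ∑ j ∈ Finset.range MM, (ρ j - ρ (j+1)) * G (j+1) k) :=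
        tv_congr _ _ _ fun k _ => by rw [main k]
      rw [e0]
      calc tv n (fun k => ρ MM * (P k - Q k) + ∑ j ∈ Finset.range MM, (ρ j - ρ (j+1)) * G (j+1) k)
          ≤ tv n (fun k => ρ MM * (P k - Q k))
            + tv n (fun k => ∑ j ∈ Finset.range MM, (ρ j - ρ (j+1)) * G (j+1) k) := tv_add_le _ _ _
        _ ≤ ρ MM * tv n (fun k => P k - Q k)
            + ∑ j ∈ Finset.range MM, tv n (fun k => (ρ j - ρ (j+1)) * G (j+1) k) := by
            have h1 := tv_smul n (ρ MM) (fun k => P k - Q k)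
            have h2 := tv_sum_le (Finset.range MM) n (fun j k => (ρ j - ρ (j+1)) * G (j+1) k)
            rw [abs_of_nonneg (hρnn MM (by omega))] at h1
            rw [h1] at *
            exact add_le_add le_rfl h2
        _ ≤ _ := by
            refine add_le_add le_rfl (Finset.sum_le_sum fun j hj => ?_)
            rw [Finset.mem_range] at hj
            have hc : 0 ≤ ρ j - ρ (j+1) := by
              have := hanti j (j+1) (Nat.le_succ j) (by omega); linarith
            rw [tv_smul n _ (fun k => G (j+1) k), abs_of_nonneg hc]
            refine mul_le_mul_of_nonneg_left ?_ hc
            exact tv_min_le n hn P Q hP hQ hP0 hPn (X (j+1))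
    have tsum : ∑ j ∈ Finset.range MM, (ρ j - ρ (j+1)) = ρ 0 - ρ MM :=
      Finset.sum_range_sub' (fun j => ρ j) MM
    rw [← Finset.sum_mul, tsum] at step
    calc tv n (fun k => F (P k) - F (Q k)) ≤ ρ 0 * tv n (fun k => P k - Q k) := by linarith
      _ ≤ _ := mul_le_mul_of_nonneg_right (le_max_left _ _) (tv_nonneg _ _)

open Set in
lemma tv_F_lt (n : ℕ) (hn : 1 ≤ n) (F w : ℝ → ℝ) (b : ℝ) (hb : 0 < b)
    (hFc : ContinuousOn F (Icc 0 b))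
    (hFd : ∀ θ ∈ Ioo (0:ℝ) b, HasDerivAt F (w θ) θ)
    (hw0 : ∀ θ ∈ Ioo (0:ℝ) b, 0 < w θ) (hw1 : ∀ θ ∈ Ioo (0:ℝ) b, w θ < 1)
    (hwm : StrictMonoOn w (Ioo 0 b) ∨ StrictAntiOn w (Ioo 0 b))
    (P Q : ℕ → ℝ) (hP : Monotone P) (hQ : Monotone Q)
    (hP0 : P 0 = 0) (hQ0 : Q 0 = 0) (hPn : P n = b) (hQn : Q n = b)
    (hPconst : ∀ k, n ≤ k → P k = P n) (hQconst : ∀ k, n ≤ k → Q k = Q n)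
    (hδpos : 0 < tv n (fun k => P k - Q k)) :
    tv n (fun k => F (P k) - F (Q k)) < tv n (fun k => P k - Q k) := by
  classical
  -- the pooled grid
  set S : Finset ℝ := ((Finset.range (n+1)).image P ∪ (Finset.range (n+1)).image Q) with hS
  have hPS : ∀ k, P k ∈ S := by
    intro k
    rcases le_or_gt k n with h | h
    · exact Finset.mem_union_left _ (Finset.mem_image.2 ⟨k, Finset.mem_range.2 (by omega), rfl⟩)
    · rw [hPconst k h.le]
      exact Finset.mem_union_left _ (Finset.mem_image.2 ⟨n, Finset.mem_range.2 (by omega), rfl⟩)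
  have hQS : ∀ k, Q k ∈ S := by
    intro k
    rcases le_or_gt k n with h | h
    · exact Finset.mem_union_right _ (Finset.mem_image.2 ⟨k, Finset.mem_range.2 (by omega), rfl⟩)
    · rw [hQconst k h.le]
      exact Finset.mem_union_right _ (Finset.mem_image.2 ⟨n, Finset.mem_range.2 (by omega), rfl⟩)
  have hSIcc : ∀ t ∈ S, t ∈ Icc (0:ℝ) b := by
    intro t ht
    rw [hS, Finset.mem_union] at ht
    rcases ht with ht | ht <;> obtain ⟨k, hk, rfl⟩ := Finset.mem_image.1 ht
    · rw [Finset.mem_range] at hk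
      exact ⟨hP0 ▸ hP (Nat.zero_le k), hPn ▸ hP (by omega : k ≤ n)⟩
    · rw [Finset.mem_range] at hk
      exact ⟨hQ0 ▸ hQ (Nat.zero_le k), hQn ▸ hQ (by omega : k ≤ n)⟩
  have hScard : 2 ≤ S.card := by
    have h0 : (0:ℝ) ∈ S := hP0 ▸ hPS 0
    have hbS : b ∈ S := hPn ▸ hPS n
    have : ({0, b} : Finset ℝ) ⊆ S := by
      intro t ht
      rcases Finset.mem_insert.1 ht with rfl | ht
      · exact h0
      · rwa [Finset.mem_singleton.1 ht]
    calc 2 = ({0, b} : Finset ℝ).card := by rw [Finset.card_insert_of_notMem (by simp [hb.ne]), Finset.card_singleton]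
      _ ≤ S.card := Finset.card_le_card this
  set M : ℕ := S.card - 1 with hM
  have hM1 : 1 ≤ M := by omega
  have hcard : S.card = M + 1 := by omega
  set iso := S.orderIsoOfFin hcard with hiso
  set X : ℕ → ℝ := fun j => (iso ⟨min j M, by omega⟩ : ℝ) with hX
  have hXmem : ∀ j, X j ∈ S := fun j => (iso _).2
  have hXm : ∀ i j, i ≤ j → j ≤ M → X i ≤ X j := by
    intro i j hij hjM
    have : (⟨min i M, by omega⟩ : Fin (M+1)) ≤ ⟨min j M, by omega⟩ := by
      simp [Fin.le_def]; omega
    exact_mod_cast iso.monotone this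
  have hXs : ∀ j, j < M → X j < X (j+1) := by
    intro j hj
    have : (⟨min j M, by omega⟩ : Fin (M+1)) < ⟨min (j+1) M, by omega⟩ := by
      simp [Fin.lt_def]; omega
    exact_mod_cast iso.strictMono this
  have hsurj : ∀ t ∈ S, ∃ j, j ≤ M ∧ X j = t := by
    intro t ht
    refine ⟨(iso.symm ⟨t, ht⟩ : Fin (M+1)), by omega, ?_⟩
    have : min ((iso.symm ⟨t, ht⟩ : Fin (M+1)) : ℕ) M = ((iso.symm ⟨t, ht⟩ : Fin (M+1)) : ℕ) := by
      have := (iso.symm ⟨t, ht⟩).isLt; omega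
    simp only [hX, this]
    rw [show (⟨((iso.symm ⟨t, ht⟩ : Fin (M+1)) : ℕ), by omega⟩ : Fin (M+1)) = iso.symm ⟨t, ht⟩ from by
      apply Fin.ext; rfl]
    simp
  have hPmem : ∀ k, ∃ i, i ≤ M ∧ P k = X i := by
    intro k; obtain ⟨j, hj, hjx⟩ := hsurj (P k) (hPS k); exact ⟨j, hj, hjx.symm⟩
  have hQmem : ∀ k, ∃ i, i ≤ M ∧ Q k = X i := by
    intro k; obtain ⟨j, hj, hjx⟩ := hsurj (Q k) (hQS k); exact ⟨j, hj, hjx.symm⟩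
  -- slopes and MVT
  set ρ : ℕ → ℝ := fun j => (F (X (j+1)) - F (X j)) / (X (j+1) - X j) with hρ
  have hXIcc : ∀ j, X j ∈ Icc (0:ℝ) b := fun j => hSIcc _ (hXmem j)
  have mvt : ∀ j, j < M → ∃ ξ ∈ Ioo (X j) (X (j+1)), w ξ = ρ j ∧ ξ ∈ Ioo (0:ℝ) b := by
    intro j hj
    have hlt := hXs j hj
    have hsub : Icc (X j) (X (j+1)) ⊆ Icc 0 b :=
      Icc_subset_Icc (hXIcc j).1 (hXIcc (j+1)).2
    have hsubo : Ioo (X j) (X (j+1)) ⊆ Ioo (0:ℝ) b := by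
      intro t ht
      exact ⟨lt_of_le_of_lt (hXIcc j).1 ht.1, lt_of_lt_of_le ht.2 (hXIcc (j+1)).2⟩
    obtain ⟨ξ, hξ, hder⟩ := exists_deriv_eq_slope F hlt (hFc.mono hsub)
      (fun t ht => ((hFd t (hsubo ht)).differentiableAt).differentiableWithinAt)
    refine ⟨ξ, hξ, ?_, hsubo hξ⟩
    show w ξ = (F (X (j+1)) - F (X j)) / (X (j+1) - X j)
    rw [← hder, (hFd ξ (hsubo hξ)).deriv]
  choose ξ hξIoo hξw hξIoo2 using fun j (hj : j < M) => mvt j hj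
  have hslope : ∀ j, j < M → F (X (j+1)) - F (X j) = ρ j * (X (j+1) - X j) := by
    intro j hj
    show F (X (j+1)) - F (X j) = (F (X (j+1)) - F (X j)) / (X (j+1) - X j) * (X (j+1) - X j)
    rw [div_mul_cancel₀ _ (sub_ne_zero.2 (hXs j hj).ne')]
  have hρw : ∀ j (hj : j < M), ρ j = w (ξ j hj) := fun j hj => (hξw j hj).symm
  have hρnn : ∀ j, j < M → 0 ≤ ρ j := by
    intro j hj
    rw [hρw j hj]
    exact (hw0 _ (hξIoo2 j hj)).le
  have hρlt1 : ∀ j (hj : j < M), ρ j < 1 := by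
    intro j hj
    rw [hρw j hj]
    exact hw1 _ (hξIoo2 j hj)
  have hξmono : ∀ i j (hi : i < M) (hj : j < M), i < j → ξ i hi < ξ j hj := by
    intro i j hi hj hij
    calc ξ i hi < X (i+1) := (hξIoo i hi).2
      _ ≤ X j := hXm (i+1) j (by omega) (by omega)
      _ < ξ j hj := (hξIoo j hj).1
  have hρmono : (∀ i j, i ≤ j → j < M → ρ i ≤ ρ j) ∨ (∀ i j, i ≤ j → j < M → ρ j ≤ ρ i) := by
    rcases hwm with hmono | hanti
    · left
      intro i j hij hj
      rcases eq_or_lt_of_le hij with rfl | hlt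
      · exact le_rfl
      · rw [hρw i (by omega), hρw j hj]
        exact (hmono (hξIoo2 i (by omega)) (hξIoo2 j hj) (hξmono i j (by omega) hj hlt)).le
    · right
      intro i j hij hj
      rcases eq_or_lt_of_le hij with rfl | hlt
      · exact le_rfl
      · rw [hρw i (by omega), hρw j hj]
        exact (hanti (hξIoo2 i (by omega)) (hξIoo2 j hj) (hξmono i j (by omega) hj hlt)).le
  -- apply the decomposition lemma
  have key := tv_decomp n M hn hM1 F P Q X ρ hP hQ (by rw [hP0, hQ0]) (by rw [hPn, hQn])
    hXm hPmem hQmem hslope hρnn hρmono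
  have hκ : max (ρ 0) (ρ (M-1)) < 1 :=
    max_lt (hρlt1 0 (by omega)) (hρlt1 (M-1) (by omega))
  calc tv n (fun k => F (P k) - F (Q k)) ≤ max (ρ 0) (ρ (M-1)) * tv n (fun k => P k - Q k) := key
    _ < 1 * tv n (fun k => P k - Q k) := by
        exact mul_lt_mul_of_pos_right hκ hδpos
    _ = tv n (fun k => P k - Q k) := one_mul _

lemma norm1_eq_tv (m : ℕ) (hm : 0 < m) (v : Fin m → ℝ) (u : ℕ → ℝ)
    (h0 : u 0 = 0) (hend : u (m+1) = 0)
    (hmid : ∀ k, 1 ≤ k → (h2 : k ≤ m) → u k = v ⟨k-1, by omega⟩) :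
    norm1 v = tv (m+1) u := by
  obtain ⟨mm, rfl⟩ : ∃ mm, m = mm + 1 := ⟨m - 1, (Nat.succ_pred_eq_of_pos hm).symm⟩
  have vc : ∀ (a b : ℕ) (ha : a < mm+1) (hb : b < mm+1), a = b → v ⟨a, ha⟩ = v ⟨b, hb⟩ :=
    fun a b ha hb h => by subst h; rfl
  unfold tv norm1
  rw [Finset.sum_range_succ, Finset.sum_range_succ']
  have e0 : |u 1 - u 0| = |v ⟨0, by omega⟩| := by
    rw [h0, hmid 1 le_rfl (by omega), sub_zero]
  have e1 : |u (mm+1+1) - u (mm+1)| = |v ⟨mm, by omega⟩| := by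
    rw [hend, hmid (mm+1) (by omega) le_rfl, zero_sub, abs_neg,
      vc (mm+1-1) mm (by omega) (by omega) (by omega)]
  rw [e0, e1]
  rw [dif_pos (by omega : 0 < mm + 1)]
  set f : ℕ → ℝ := fun k => if h : k < mm then
      |v ⟨k, by omega⟩ - v ⟨k+1, by omega⟩| else 0 with hf
  have emid : ∑ k ∈ Finset.range mm, |u (k+1+1) - u (k+1)| = ∑ k ∈ Finset.range mm, f k := by
    refine Finset.sum_congr rfl fun k hk => ?_
    have hk' : k < mm := Finset.mem_range.1 hk
    rw [hmid (k+2) (by omega) (by omega), hmid (k+1) (by omega) (by omega), abs_sub_comm,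
      vc (k+1-1) k (by omega) (by omega) (by omega),
      vc (k+2-1) (k+1) (by omega) (by omega) (by omega)]
    show _ = f k
    simp only [hf]
    rw [dif_pos hk']
  have efin : ∑ k : Fin (mm+1-1),
      |v ⟨(k:ℕ), Nat.lt_of_lt_of_le k.isLt (Nat.sub_le (mm+1) 1)⟩ -
        v ⟨(k:ℕ)+1, Nat.add_lt_of_lt_sub k.isLt⟩|
      = ∑ k ∈ Finset.range mm, f k := by
    rw [← Fin.sum_univ_eq_sum_range f mm]
    refine Finset.sum_congr rfl fun k _ => ?_
    show _ = f (k : ℕ)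
    simp only [hf]
    rw [dif_pos (by omega : (k:ℕ) < mm)]
  rw [emid, efin, vc (mm+1-1) mm (by omega) (by omega) (by omega)]
  ring

lemma norm1_eq_tv' (m : ℕ) (hm : 0 < m) (d : Fin m → ℝ) (u : ℕ → ℝ)
    (h0 : u 0 = 0) (hend : u (m+1) = 0)
    (hmid : ∀ k, 1 ≤ k → (h2 : k ≤ m) →
      u k = - d ⟨m-1, by omega⟩ + (if k = 1 then 0 else d ⟨k-2, by omega⟩)) :
    norm1 d = tv (m+1) u := by
  have dc : ∀ (a b : ℕ) (ha : a < m) (hb : b < m), a = b → d ⟨a, ha⟩ = d ⟨b, hb⟩ :=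
    fun a b ha hb h => by subst h; rfl
  rcases Nat.lt_or_ge m 2 with hm2 | hm2
  · -- m = 1
    obtain rfl : m = 1 := by omega
    unfold tv norm1
    rw [Finset.sum_range_succ, Finset.sum_range_succ, Finset.sum_range_zero]
    rw [h0, hend, hmid 1 le_rfl le_rfl, if_pos rfl]
    have hz : ∑ k : Fin (1-1), |d ⟨(k:ℕ), Nat.lt_of_lt_of_le k.isLt (Nat.sub_le 1 1)⟩ -
        d ⟨(k:ℕ)+1, Nat.add_lt_of_lt_sub k.isLt⟩| = 0 := by
      apply Finset.sum_eq_zero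
      intro k _
      exact absurd k.isLt (by omega)
    rw [hz, dif_pos (by omega : 0 < 1)]
    have e : (⟨1-1, by omega⟩ : Fin 1) = ⟨0, by omega⟩ := rfl
    rw [e]
    have e1 : |(0:ℝ) + (-d ⟨0, by omega⟩ + 0) - 0| = |d ⟨0, by omega⟩| := by
      rw [show (0:ℝ) + (-d ⟨0, by omega⟩ + 0) - 0 = -(d ⟨0, by omega⟩) from by ring, abs_neg]
    have e2 : |(0:ℝ) - (-d ⟨0, by omega⟩ + 0)| = |d ⟨0, by omega⟩| := by
      rw [show (0:ℝ) - (-d ⟨0, by omega⟩ + 0) = d ⟨0, by omega⟩ from by ring]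
    rw [show -d ⟨1-1, by omega⟩ + 0 - 0 = -(d ⟨0, by omega⟩) from by ring_nf, abs_neg,
      show (0:ℝ) - (-d ⟨1-1, by omega⟩ + 0) = d ⟨0, by omega⟩ from by ring_nf]
    ring
  · -- m = mm + 2
    obtain ⟨mm, rfl⟩ : ∃ mm, m = mm + 2 := ⟨m - 2, by omega⟩
    set g : ℕ → ℝ := fun k => if h : k < mm + 1 then
        |d ⟨k, by omega⟩ - d ⟨k+1, by omega⟩| else 0 with hg
    unfold tv norm1
    rw [Finset.sum_range_succ, Finset.sum_range_succ', Finset.sum_range_succ']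
    have e0 : |u 1 - u 0| = |d ⟨mm+1, by omega⟩| := by
      rw [h0, hmid 1 le_rfl (by omega), if_pos rfl, sub_zero, add_zero, abs_neg,
        dc (mm+2-1) (mm+1) (by omega) (by omega) (by omega)]
    have e1 : |u 2 - u 1| = |d ⟨0, by omega⟩| := by
      rw [hmid 2 (by omega) (by omega), hmid 1 le_rfl (by omega), if_pos rfl,
        if_neg (by omega : ¬ (2 = 1))]
      rw [dc (2-2) 0 (by omega) (by omega) (by omega)]
      ring_nf
    have e2 : |u (mm+2+1) - u (mm+2)| = g mm := by
      rw [hend, hmid (mm+2) (by omega) le_rfl, if_neg (by omega : ¬ (mm+2 = 1)),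
        dc (mm+2-2) mm (by omega) (by omega) (by omega),
        dc (mm+2-1) (mm+1) (by omega) (by omega) (by omega)]
      simp only [hg]
      rw [dif_pos (by omega : mm < mm+1)]
      rw [show (0:ℝ) - (-d ⟨mm+1, by omega⟩ + d ⟨mm, by omega⟩)
        = d ⟨mm+1, by omega⟩ - d ⟨mm, by omega⟩ from by ring, abs_sub_comm]
    have emid : ∑ k ∈ Finset.range mm, |u (k+1+1+1) - u (k+1+1)|
        = ∑ k ∈ Finset.range mm, g k := by
      refine Finset.sum_congr rfl fun k hk => ?_
      have hk' : k < mm := Finset.mem_range.1 hk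
      rw [hmid (k+3) (by omega) (by omega), hmid (k+2) (by omega) (by omega),
        if_neg (by omega : ¬ (k+3 = 1)), if_neg (by omega : ¬ (k+2 = 1)),
        dc (k+3-2) (k+1) (by omega) (by omega) (by omega),
        dc (k+2-2) k (by omega) (by omega) (by omega)]
      simp only [hg]
      rw [dif_pos (by omega : k < mm+1)]
      rw [show -d ⟨mm+2-1, by omega⟩ + d ⟨k+1, by omega⟩ - (-d ⟨mm+2-1, by omega⟩ + d ⟨k, by omega⟩)
        = d ⟨k+1, by omega⟩ - d ⟨k, by omega⟩ from by ring, abs_sub_comm]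
    have efin : ∑ k : Fin (mm+2-1),
        |d ⟨(k:ℕ), Nat.lt_of_lt_of_le k.isLt (Nat.sub_le (mm+2) 1)⟩ -
          d ⟨(k:ℕ)+1, Nat.add_lt_of_lt_sub k.isLt⟩|
        = (∑ k ∈ Finset.range mm, g k) + g mm := by
      have h1 : ∑ k : Fin (mm+2-1),
          |d ⟨(k:ℕ), Nat.lt_of_lt_of_le k.isLt (Nat.sub_le (mm+2) 1)⟩ -
            d ⟨(k:ℕ)+1, Nat.add_lt_of_lt_sub k.isLt⟩| = ∑ k ∈ Finset.range (mm+1), g k := by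
        rw [← Fin.sum_univ_eq_sum_range g (mm+1)]
        refine Finset.sum_congr rfl fun k _ => ?_
        show _ = g (k : ℕ)
        simp only [hg]
        rw [dif_pos (by omega : (k:ℕ) < mm+1)]
      rw [h1, Finset.sum_range_succ]
    rw [e0, e1, e2, emid, efin, dif_pos (by omega : 0 < mm+2),
      dc (mm+2-1) (mm+1) (by omega) (by omega) (by omega)]
    ring

end FiringAux

/-- Theorem (firing map contraction for monotone decreasing PRC):
if the finite PRC `Z` is C², order-preserving (`Z' > −1`), monotone decreasing
(`Z' < 0`) and of constant convexity on `(0,2π)`, then the `(N−1)`-dimensional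
firing map is contracting on the cone with respect to the 1-norm. -/
theorem firing_map_contracting
    (N : ℕ) (hN : 1 < N) (Z : ℝ → ℝ)
    (hZC2 : ContDiffOn ℝ 2 Z (Icc 0 (2 * π)))
    (hZord : ∀ θ ∈ Ioo (0 : ℝ) (2 * π), -1 < deriv Z θ)
    (hZmono : ∀ θ ∈ Ioo (0 : ℝ) (2 * π), deriv Z θ < 0)
    (hZconv : (∀ θ ∈ Ioo (0 : ℝ) (2 * π), 0 < deriv (deriv Z) θ) ∨
              (∀ θ ∈ Ioo (0 : ℝ) (2 * π), deriv (deriv Z) θ < 0))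
    (x y : Fin (N - 1) → ℝ)
    (hx : x ∈ firingCone) (hy : y ∈ firingCone) (hxy : x ≠ y)
    (hHx : firingMap Z x ∈ firingCone) (hHy : firingMap Z y ∈ firingCone) :
    norm1 (firingMap Z x - firingMap Z y) < norm1 (x - y) := by
  obtain ⟨hx1, hx2, hx3⟩ := hx
  obtain ⟨hy1, hy2, hy3⟩ := hy
  have hπ : (0:ℝ) < π := Real.pi_pos
  have hb : (0:ℝ) < 2 * π := by linarith
  have hm : 0 < N - 1 := by omega
  -- analytic preliminaries
  set F : ℝ → ℝ := fun u => u + Z u with hF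
  set w : ℝ → ℝ := fun θ => 1 + deriv Z θ with hw
  have hsub : Ioo (0:ℝ) (2*π) ⊆ Icc 0 (2*π) := Ioo_subset_Icc_self
  have hZ2' := hZC2.mono hsub
  rw [(by norm_num : (2: WithTop ℕ∞) = 1 + 1), contDiffOn_succ_iff_deriv_of_isOpen isOpen_Ioo]
    at hZ2'
  have hdZc : ContinuousOn (deriv Z) (Ioo 0 (2*π)) := hZ2'.2.2.continuousOn
  have hdZd : ∀ θ ∈ Ioo (0:ℝ) (2*π), DifferentiableAt ℝ Z θ := fun θ hθ =>
    (hZ2'.1 θ hθ).differentiableAt (isOpen_Ioo.mem_nhds hθ)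
  have hFc : ContinuousOn F (Icc 0 (2*π)) := (continuousOn_id).add (hZC2.continuousOn)
  have hFd : ∀ θ ∈ Ioo (0:ℝ) (2*π), HasDerivAt F (w θ) θ := fun θ hθ =>
    (hasDerivAt_id θ).add ((hdZd θ hθ).hasDerivAt)
  have hw0 : ∀ θ ∈ Ioo (0:ℝ) (2*π), 0 < w θ := by
    intro θ hθ; have := hZord θ hθ; simp only [hw]; linarith
  have hw1 : ∀ θ ∈ Ioo (0:ℝ) (2*π), w θ < 1 := by
    intro θ hθ; have := hZmono θ hθ; simp only [hw]; linarith
  have hwm : StrictMonoOn w (Ioo 0 (2*π)) ∨ StrictAntiOn w (Ioo 0 (2*π)) := by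
    rcases hZconv with hconv | hconv
    · left
      have : StrictMonoOn (deriv Z) (Ioo 0 (2*π)) := by
        apply strictMonoOn_of_deriv_pos (convex_Ioo _ _) hdZc
        intro θ hθ
        rw [interior_Ioo] at hθ
        exact hconv θ hθ
      intro a ha b hb hab
      simp only [hw]
      have := this ha hb hab
      linarith
    · right
      have : StrictAntiOn (deriv Z) (Ioo 0 (2*π)) := by
        apply strictAntiOn_of_deriv_neg (convex_Ioo _ _) hdZc
        intro θ hθ
        rw [interior_Ioo] at hθ
        exact hconv θ hθ
      intro a ha b hb hab
      simp only [hw]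
      have := this ha hb hab
      linarith
  -- the two increasing sequences
  set P : ℕ → ℝ := fun k => if k = 0 then 0 else if h : k ≤ (N-1) then
      2*π - x ⟨(N-1)-1, by omega⟩ + (if k = 1 then 0 else x ⟨k-2, by omega⟩) else 2*π with hP
  set Q : ℕ → ℝ := fun k => if k = 0 then 0 else if h : k ≤ (N-1) then
      2*π - y ⟨(N-1)-1, by omega⟩ + (if k = 1 then 0 else y ⟨k-2, by omega⟩) else 2*π with hQ
  have hP0 : P 0 = 0 := if_pos rfl
  have hQ0 : Q 0 = 0 := if_pos rfl
  have hPn : P ((N-1)+1) = 2*π := by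
    simp only [hP]
    rw [if_neg (by omega : ¬ ((N-1)+1 = 0)), dif_neg (by omega : ¬ ((N-1)+1 ≤ (N-1)))]
  have hQn : Q ((N-1)+1) = 2*π := by
    simp only [hQ]
    rw [if_neg (by omega : ¬ ((N-1)+1 = 0)), dif_neg (by omega : ¬ ((N-1)+1 ≤ (N-1)))]
  have hPconst : ∀ k, (N-1)+1 ≤ k → P k = P ((N-1)+1) := by
    intro k hk
    rw [hPn]
    simp only [hP]
    rw [if_neg (by omega : ¬ (k = 0)), dif_neg (by omega : ¬ (k ≤ (N-1)))]
  have hQconst : ∀ k, (N-1)+1 ≤ k → Q k = Q ((N-1)+1) := by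
    intro k hk
    rw [hQn]
    simp only [hQ]
    rw [if_neg (by omega : ¬ (k = 0)), dif_neg (by omega : ¬ (k ≤ (N-1)))]
  -- values of P on the window
  have hPval : ∀ k, 1 ≤ k → (hk2 : k ≤ (N-1)) →
      P k = 2*π - x ⟨(N-1)-1, by omega⟩ + (if k = 1 then 0 else x ⟨k-2, by omega⟩) := by
    intro k hk1 hk2
    simp only [hP]
    rw [if_neg (by omega : ¬ (k = 0)), dif_pos hk2]
  have hQval : ∀ k, 1 ≤ k → (hk2 : k ≤ (N-1)) →
      Q k = 2*π - y ⟨(N-1)-1, by omega⟩ + (if k = 1 then 0 else y ⟨k-2, by omega⟩) := by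
    intro k hk1 hk2
    simp only [hQ]
    rw [if_neg (by omega : ¬ (k = 0)), dif_pos hk2]
  -- monotonicity
  have hPm : Monotone P := by
    apply monotone_nat_of_le_succ
    intro k
    rcases Nat.eq_zero_or_pos k with rfl | hk1
    · rcases Nat.lt_or_ge 1 (N-1) with h1m | h1m
      · rw [hP0, hPval 1 le_rfl (by omega), if_pos rfl, add_zero]
        have := hx3 ⟨(N-1)-1, by omega⟩
        linarith
      · rw [hP0, hPval 1 le_rfl (by omega), if_pos rfl, add_zero]
        have := hx3 ⟨(N-1)-1, by omega⟩
        linarith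
    · rcases Nat.lt_or_ge k (N-1) with hkm | hkm
      · -- k+1 ≤ (N-1)
        rw [hPval k hk1 (by omega), hPval (k+1) (by omega) (by omega)]
        rcases Nat.eq_or_lt_of_le hk1 with h1 | h2
        · -- k = 1
          rw [if_pos h1.symm, if_neg (by omega : ¬ (k+1 = 1))]
          have := hx1 ⟨k+1-2, by omega⟩
          linarith
        · rw [if_neg (by omega : ¬ (k = 1)), if_neg (by omega : ¬ (k+1 = 1))]
          have : x ⟨k-2, by omega⟩ ≤ x ⟨k+1-2, by omega⟩ := by
            apply (hx2.le_iff_le).2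
            show (k:ℕ) - 2 ≤ k+1-2
            omega
          linarith
      · rcases Nat.eq_or_lt_of_le hkm with hkm' | hkm'
        · -- k = (N-1), P ((N-1)+1) = 2π
          have hPk1 : P (k+1) = 2*π := by
            rw [show k+1 = (N-1)+1 from by omega, hPn]
          rw [hPk1, hPval k hk1 (by omega)]
          rcases Nat.eq_or_lt_of_le hk1 with h1 | h2
          · rw [if_pos h1.symm, add_zero]
            have := hx1 ⟨(N-1)-1, by omega⟩
            linarith
          · rw [if_neg (by omega : ¬ (k = 1))]
            have : x ⟨k-2, by omega⟩ < x ⟨(N-1)-1, by omega⟩ := by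
              apply hx2
              show (k:ℕ) - 2 < (N-1)-1
              omega
            linarith
        · rw [hPconst k (by omega), hPconst (k+1) (by omega)]
  have hQm : Monotone Q := by
    apply monotone_nat_of_le_succ
    intro k
    rcases Nat.eq_zero_or_pos k with rfl | hk1
    · rw [hQ0, hQval 1 le_rfl (by omega), if_pos rfl, add_zero]
      have := hy3 ⟨(N-1)-1, by omega⟩
      linarith
    · rcases Nat.lt_or_ge k (N-1) with hkm | hkm
      · rw [hQval k hk1 (by omega), hQval (k+1) (by omega) (by omega)]
        rcases Nat.eq_or_lt_of_le hk1 with h1 | h2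
        · rw [if_pos h1.symm, if_neg (by omega : ¬ (k+1 = 1))]
          have := hy1 ⟨k+1-2, by omega⟩
          linarith
        · rw [if_neg (by omega : ¬ (k = 1)), if_neg (by omega : ¬ (k+1 = 1))]
          have : y ⟨k-2, by omega⟩ ≤ y ⟨k+1-2, by omega⟩ := by
            apply (hy2.le_iff_le).2
            show (k:ℕ) - 2 ≤ k+1-2
            omega
          linarith
      · rcases Nat.eq_or_lt_of_le hkm with hkm' | hkm'
        · have hQk1 : Q (k+1) = 2*π := by
            rw [show k+1 = (N-1)+1 from by omega, hQn]
          rw [hQk1, hQval k hk1 (by omega)]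
          rcases Nat.eq_or_lt_of_le hk1 with h1 | h2
          · rw [if_pos h1.symm, add_zero]
            have := hy1 ⟨(N-1)-1, by omega⟩
            linarith
          · rw [if_neg (by omega : ¬ (k = 1))]
            have : y ⟨k-2, by omega⟩ < y ⟨(N-1)-1, by omega⟩ := by
              apply hy2
              show (k:ℕ) - 2 < (N-1)-1
              omega
            linarith
        · rw [hQconst k (by omega), hQconst (k+1) (by omega)]
  -- the difference expression on the window
  have hδval : ∀ k, 1 ≤ k → (hk2 : k ≤ (N-1)) →
      P k - Q k = - (x - y) ⟨(N-1)-1, by omega⟩ + (if k = 1 then 0 else (x - y) ⟨k-2, by omega⟩) := by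
    intro k hk1 hk2
    rw [hPval k hk1 hk2, hQval k hk1 hk2]
    by_cases h1 : k = 1
    · rw [if_pos h1, if_pos h1, if_pos h1, Pi.sub_apply]
      ring
    · rw [if_neg h1, if_neg h1, if_neg h1, Pi.sub_apply, Pi.sub_apply]
      ring
  -- positivity of the δ total variation
  have hδpos : 0 < tv ((N-1)+1) (fun k => P k - Q k) := by
    rcases (tv_nonneg ((N-1)+1) (fun k => P k - Q k)).lt_or_eq with h | h
    · exact h
    · exfalso
      apply hxy
      have hz := tv_eq_zero_imp ((N-1)+1) _ h.symm
      have hz0 : P 0 - Q 0 = 0 := by rw [hP0, hQ0]; ring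
      have hzz : ∀ k ≤ (N-1)+1, P k - Q k = 0 := by
        intro k hk
        have := hz k hk
        rw [this, hz0]
      have hlast : x ⟨(N-1)-1, by omega⟩ = y ⟨(N-1)-1, by omega⟩ := by
        have := hzz 1 (by omega)
        rw [hδval 1 le_rfl (by omega), if_pos rfl, Pi.sub_apply] at this
        linarith
      funext i
      rcases Nat.lt_or_ge (i : ℕ) ((N-1)-1) with hi | hi
      · have := hzz ((i:ℕ)+2) (by omega)
        rw [hδval ((i:ℕ)+2) (by omega) (by omega), if_neg (by omega : ¬ ((i:ℕ)+2 = 1)),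
          Pi.sub_apply, Pi.sub_apply] at this
        have he : (⟨(i:ℕ)+2-2, by omega⟩ : Fin (N-1)) = i := by
          apply Fin.ext
          show (i:ℕ)+2-2 = (i:ℕ)
          omega
        rw [he] at this
        have hl := hlast
        -- x i - y i = 0
        have : x i - y i = 0 := by
          have h2 : x ⟨(N-1)-1, by omega⟩ - y ⟨(N-1)-1, by omega⟩ = 0 := by rw [hlast]; ring
          linarith
        linarith [this]
      · have he : i = (⟨(N-1)-1, by omega⟩ : Fin (N-1)) := by
          apply Fin.ext
          show (i:ℕ) = (N-1)-1
          have := i.isLt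
          omega
        rw [he]
        exact hlast
  -- bridge 1 : the image side
  have hL : norm1 (firingMap Z x - firingMap Z y) = tv ((N-1)+1) (fun k => F (P k) - F (Q k)) := by
    apply norm1_eq_tv (N-1) hm
    · rw [hP0, hQ0]; ring
    · rw [hPn, hQn]; ring
    · intro k hk1 hk2
      have hFS : ∀ θ : ℝ, firingScalar Z θ = F (2*π - θ) := by
        intro θ; simp only [firingScalar, hF]
      rw [Pi.sub_apply]
      show F (P k) - F (Q k) = firingMap Z x ⟨k-1, by omega⟩ - firingMap Z y ⟨k-1, by omega⟩
      simp only [firingMap]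
      rw [hFS, hFS]
      congr 2
      · -- P k = 2π - (x_{(N-1)-1} - dite ...)
        rw [hPval k hk1 hk2]
        by_cases h1 : k = 1
        · subst h1
          rw [if_pos rfl, dif_pos (show ((⟨1-1, by omega⟩ : Fin (N-1)) : ℕ) = 0 from rfl)]
          ring
        · rw [if_neg h1, dif_neg (show ¬ ((⟨k-1, by omega⟩ : Fin (N-1)) : ℕ) = 0 from by
            show ¬ (k-1 = 0); omega)]
          have he : (⟨((⟨k-1, by omega⟩ : Fin (N-1)) : ℕ) - 1,
              Nat.lt_of_le_of_lt (Nat.sub_le _ _) (Fin.isLt _)⟩ : Fin (N-1)) = ⟨k-2, by omega⟩ := by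
            apply Fin.ext
            show (k-1) - 1 = k-2
            omega
          rw [he]
          ring
      · rw [hQval k hk1 hk2]
        by_cases h1 : k = 1
        · subst h1
          rw [if_pos rfl, dif_pos (show ((⟨1-1, by omega⟩ : Fin (N-1)) : ℕ) = 0 from rfl)]
          ring
        · rw [if_neg h1, dif_neg (show ¬ ((⟨k-1, by omega⟩ : Fin (N-1)) : ℕ) = 0 from by
            show ¬ (k-1 = 0); omega)]
          have he : (⟨((⟨k-1, by omega⟩ : Fin (N-1)) : ℕ) - 1,
              Nat.lt_of_le_of_lt (Nat.sub_le _ _) (Fin.isLt _)⟩ : Fin (N-1)) = ⟨k-2, by omega⟩ := by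
            apply Fin.ext
            show (k-1) - 1 = k-2
            omega
          rw [he]
          ring
  -- bridge 2 : the source side
  have hR : norm1 (x - y) = tv ((N-1)+1) (fun k => P k - Q k) := by
    apply norm1_eq_tv' (N-1) hm
    · rw [hP0, hQ0]; ring
    · rw [hPn, hQn]; ring
    · intro k hk1 hk2
      exact hδval k hk1 hk2
  rw [hL, hR]
  exact tv_F_lt ((N-1)+1) (by omega) F w (2*π) hb hFc hFd hw0 hw1 hwm P Q hPm hQm hP0 hQ0
    hPn hQn hPconst hQconst hδpos
end

section
/- Let N > 1 and let Z : [0,2π] → ℝ be a twice continuously differentiable finite phase response curve satisfying Z'(θ) > −1 for all θ ∈ (0,2π), Z'(θ) > 0 for all θ ∈ (0,2π), and either Z''(θ) > 0 for all θ ∈ (0,2π) or Z''(θ) < 0 for all θ ∈ (0,2π). Then the (N−1)-dimensional firing map H is expanding with respect to the 1-norm on the cone C_N: for all x, y ∈ C_N with x ≠ y such that H(x) and H(y) are defined, ‖H(x) − H(y)‖ > ‖x − y‖. -/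
set_option maxHeartbeats 2000000


open Real Set

private lemma star_ineq (p₁ p₂ g₁ g₂ : ℝ)
    (s1 : 0 < p₁ → 0 < g₁) (s2 : p₁ < 0 → g₁ < 0) (s3 : p₁ = 0 → g₁ = 0)
    (s4 : 0 < p₂ → 0 < g₂) (s5 : p₂ < 0 → g₂ < 0) (s6 : p₂ = 0 → g₂ = 0)
    (hA : 0 ≤ p₁ → p₁ ≤ p₂ → g₁ ≤ g₂)
    (hB : p₁ ≤ 0 → p₂ ≤ p₁ → g₂ ≤ g₁) :
    |p₂ - p₁| + (|g₁| - |g₂|) ≤ |p₂ + g₂ - (p₁ + g₁)| := by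
  rcases lt_trichotomy p₁ 0 with h1 | h1 | h1 <;>
    rcases lt_trichotomy p₂ 0 with h2 | h2 | h2 <;>
    rcases le_total p₁ p₂ with h3 | h3 <;>
    [ (have hg1 := s2 h1; have hg2 := s5 h2);
      (have hg1 := s2 h1; have hg2 := s5 h2; have hD := hB h1.le h3);
      (have hg1 := s2 h1; have hg2 := s6 h2);
      (have hg1 := s2 h1; have hg2 := s6 h2; have hD := hB h1.le h3);
      (have hg1 := s2 h1; have hg2 := s4 h2);
      (exact absurd h3 (by linarith));
      (have hg1 := s3 h1; have hg2 := s5 h2; have hD := hB h1.le (by linarith));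
      (have hg1 := s3 h1; have hg2 := s5 h2; have hD := hB h1.le h3);
      (have hg1 := s3 h1; have hg2 := s6 h2);
      (have hg1 := s3 h1; have hg2 := s6 h2);
      (have hg1 := s3 h1; have hg2 := s4 h2; have hD := hA h1.ge h3);
      (exact absurd h3 (by linarith));
      (exact absurd h3 (by linarith));
      (have hg1 := s1 h1; have hg2 := s5 h2);
      (exact absurd h3 (by linarith));
      (have hg1 := s1 h1; have hg2 := s6 h2);
      (have hg1 := s1 h1; have hg2 := s4 h2; have hD := hA h1.le h3);
      (have hg1 := s1 h1; have hg2 := s4 h2)] <;>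
  (rcases abs_cases (p₂ + g₂ - (p₁ + g₁)) with ⟨hE, hE'⟩ | ⟨hE, hE'⟩ <;>
   rcases abs_cases (p₂ - p₁) with ⟨hF, hF'⟩ | ⟨hF, hF'⟩ <;>
   rcases abs_cases g₁ with ⟨hG, hG'⟩ | ⟨hG, hG'⟩ <;>
   rcases abs_cases g₂ with ⟨hH, hH'⟩ | ⟨hH, hH'⟩ <;> linarith)

private lemma sum_star (n : ℕ) (p g : ℕ → ℝ)
    (hsign : ∀ i, i ≤ n → ((0 < p i → 0 < g i) ∧ (p i < 0 → g i < 0) ∧ (p i = 0 → g i = 0)))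
    (hA : ∀ i, i < n → 0 ≤ p i → p i ≤ p (i+1) → g i ≤ g (i+1))
    (hB : ∀ i, i < n → p i ≤ 0 → p (i+1) ≤ p i → g (i+1) ≤ g i)
    (h0 : p 0 = 0) (hn : p n = 0)
    (hex : ∃ j, j ≤ n ∧ p j ≠ 0) :
    ∑ i ∈ Finset.range n, |p (i+1) - p i| <
      ∑ i ∈ Finset.range n, |p (i+1) + g (i+1) - (p i + g i)| := by
  classical
  obtain ⟨j₀, hj₀n, hj₀⟩ := hex
  have hP : ∃ j, p j ≠ 0 := ⟨j₀, hj₀⟩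
  set j := Nat.find hP with hjdef
  have hj : p j ≠ 0 := Nat.find_spec hP
  have hmin : ∀ k, k < j → p k = 0 := fun k hk => not_not.mp (Nat.find_min hP hk)
  have hjn : j ≤ n := Nat.find_min' hP hj₀ |>.trans hj₀n
  have hj1 : 1 ≤ j := by
    rcases Nat.eq_zero_or_pos j with h | h
    · exact absurd (h ▸ h0) hj
    · exact h
  have hg0 : ∀ i, i ≤ n → p i = 0 → g i = 0 := fun i hi => (hsign i hi).2.2
  have hle : ∀ i ∈ Finset.range n,
      |p (i+1) - p i| + (|g i| - |g (i+1)|) ≤ |p (i+1) + g (i+1) - (p i + g i)| := by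
    intro i hi
    simp only [Finset.mem_range] at hi
    have h₁ := hsign i hi.le
    have h₂ := hsign (i+1) hi
    exact star_ineq (p i) (p (i+1)) (g i) (g (i+1)) h₁.1 h₁.2.1 h₁.2.2 h₂.1 h₂.2.1 h₂.2.2
      (hA i hi) (hB i hi)
  have hi0 : j - 1 < n := by omega
  have hpj1 : p (j-1) = 0 := hmin _ (by omega)
  have hgj1 : g (j-1) = 0 := hg0 _ (by omega) hpj1
  have hjj : j - 1 + 1 = j := by omega
  have habs : |p j + g j| = |p j| + |g j| ∧ g j ≠ 0 := by
    rcases lt_trichotomy (p j) 0 with h | h | h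
    · have hg := (hsign j hjn).2.1 h
      constructor
      · rw [abs_of_neg h, abs_of_neg hg, abs_of_neg (by linarith)] <;> try ring
      · exact ne_of_lt hg
    · exact absurd h hj
    · have hg := (hsign j hjn).1 h
      constructor
      · rw [abs_of_pos h, abs_of_pos hg, abs_of_pos (by linarith)] <;> try ring
      · exact ne_of_gt hg
  have hstrict : |p (j-1+1) - p (j-1)| + (|g (j-1)| - |g (j-1+1)|) <
      |p (j-1+1) + g (j-1+1) - (p (j-1) + g (j-1))| := by
    rw [hjj, hpj1, hgj1]
    simp only [sub_zero, add_zero, abs_zero, zero_sub, zero_add]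
    rw [habs.1]
    have : 0 < |g j| := abs_pos.mpr habs.2
    linarith
  have hsum := Finset.sum_lt_sum hle ⟨j-1, Finset.mem_range.mpr hi0, hstrict⟩
  have hLHS : ∑ i ∈ Finset.range n, (|p (i+1) - p i| + (|g i| - |g (i+1)|))
      = ∑ i ∈ Finset.range n, |p (i+1) - p i| := by
    rw [Finset.sum_add_distrib, Finset.sum_range_sub' (fun i => |g i|) n]
    have h1 : g 0 = 0 := hg0 0 (Nat.zero_le n) h0
    have h2 : g n = 0 := hg0 n le_rfl hn
    simp [h1, h2]
  rw [hLHS] at hsum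
  exact hsum

private lemma sum_reflect (n : ℕ) (q : ℕ → ℝ) :
    ∑ i ∈ Finset.range n, |q (n - (i+1)) - q (n - i)| = ∑ i ∈ Finset.range n, |q (i+1) - q i| := by
  calc ∑ i ∈ Finset.range n, |q (n - (i+1)) - q (n - i)|
      = ∑ i ∈ Finset.range n, (fun j => |q (j+1) - q j|) (n - 1 - i) := by
        apply Finset.sum_congr rfl
        intro i hi
        simp only [Finset.mem_range] at hi
        have h2 : n - 1 - i = n - (i+1) := by omega
        have h3 : n - (i+1) + 1 = n - i := by omega
        rw [abs_sub_comm]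
        simp only [h2, h3]
    _ = ∑ i ∈ Finset.range n, |q (i+1) - q i| :=
        Finset.sum_range_reflect (fun j => |q (j + 1) - q j|) n

private lemma sum_reflect2 (n : ℕ) (a b : ℕ → ℝ) :
    ∑ i ∈ Finset.range n, |a (n-(i+1)) + b (n-(i+1)) - (a (n-i) + b (n-i))| =
      ∑ i ∈ Finset.range n, |a (i+1) + b (i+1) - (a i + b i)| := by
  simpa using sum_reflect n (fun k => a k + b k)

private lemma incr_mono (Z : ℝ → ℝ)
    (hdiff : ∀ θ ∈ Ioo (0:ℝ) (2*π), DifferentiableAt ℝ Z θ)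
    (hmono : MonotoneOn (deriv Z) (Ioo (0:ℝ) (2*π)))
    {a b L : ℝ} (hL : 0 ≤ L) (ha : 0 < a) (hab : a ≤ b) (hb : b + L < 2*π) :
    Z (a + L) - Z a ≤ Z (b + L) - Z b := by
  have hmem : ∀ t ∈ Icc a b, t ∈ Ioo (0:ℝ) (2*π) := fun t ht =>
    ⟨lt_of_lt_of_le ha ht.1, by have := ht.2; linarith⟩
  have hmem' : ∀ t ∈ Icc a b, t + L ∈ Ioo (0:ℝ) (2*π) := fun t ht =>
    ⟨by have := (hmem t ht).1; linarith, by have := ht.2; linarith⟩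
  have key : MonotoneOn (fun t => Z (t + L) - Z t) (Icc a b) := by
    apply monotoneOn_of_deriv_nonneg (convex_Icc a b)
    · apply ContinuousOn.sub
      · intro t ht
        exact (((hdiff (t+L) (hmem' t ht)).comp t
          (differentiableAt_fun_id.add_const L)).continuousAt).continuousWithinAt
      · intro t ht
        exact (hdiff t (hmem t ht)).continuousAt.continuousWithinAt
    · rw [interior_Icc]
      intro t ht
      have ht' := Ioo_subset_Icc_self ht
      have h1 : DifferentiableAt ℝ (fun s => Z (s + L)) t :=
        (hdiff (t+L) (hmem' t ht')).comp t (differentiableAt_fun_id.add_const L)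
      exact (h1.sub (hdiff t (hmem t ht'))).differentiableWithinAt
    · rw [interior_Icc]
      intro t ht
      have ht' := Ioo_subset_Icc_self ht
      have hmt := hmem t ht'
      have hmt' := hmem' t ht'
      have h1 : DifferentiableAt ℝ (fun s => Z (s + L)) t :=
        (hdiff (t+L) hmt').comp t (differentiableAt_fun_id.add_const L)
      have hd : deriv (fun s => Z (s + L) - Z s) t = deriv Z (t + L) - deriv Z t := by
        rw [deriv_fun_sub h1 (hdiff t hmt)]
        congr 1
        exact deriv_comp_add_const Z L t
      rw [hd]
      have := hmono hmt hmt' (by linarith)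
      linarith
  have := key ⟨le_rfl, hab⟩ ⟨hab, le_rfl⟩ hab
  simpa using this

private lemma incr_anti (Z : ℝ → ℝ)
    (hdiff : ∀ θ ∈ Ioo (0:ℝ) (2*π), DifferentiableAt ℝ Z θ)
    (hanti : AntitoneOn (deriv Z) (Ioo (0:ℝ) (2*π)))
    {a b L : ℝ} (hL : 0 ≤ L) (ha : 0 < a) (hab : a ≤ b) (hb : b + L < 2*π) :
    Z (b + L) - Z b ≤ Z (a + L) - Z a := by
  have hmem : ∀ t ∈ Icc a b, t ∈ Ioo (0:ℝ) (2*π) := fun t ht =>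
    ⟨lt_of_lt_of_le ha ht.1, by have := ht.2; linarith⟩
  have hmem' : ∀ t ∈ Icc a b, t + L ∈ Ioo (0:ℝ) (2*π) := fun t ht =>
    ⟨by have := (hmem t ht).1; linarith, by have := ht.2; linarith⟩
  have key : AntitoneOn (fun t => Z (t + L) - Z t) (Icc a b) := by
    apply antitoneOn_of_deriv_nonpos (convex_Icc a b)
    · apply ContinuousOn.sub
      · intro t ht
        exact (((hdiff (t+L) (hmem' t ht)).comp t
          (differentiableAt_fun_id.add_const L)).continuousAt).continuousWithinAt
      · intro t ht
        exact (hdiff t (hmem t ht)).continuousAt.continuousWithinAt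
    · rw [interior_Icc]
      intro t ht
      have ht' := Ioo_subset_Icc_self ht
      have h1 : DifferentiableAt ℝ (fun s => Z (s + L)) t :=
        (hdiff (t+L) (hmem' t ht')).comp t (differentiableAt_fun_id.add_const L)
      exact (h1.sub (hdiff t (hmem t ht'))).differentiableWithinAt
    · rw [interior_Icc]
      intro t ht
      have ht' := Ioo_subset_Icc_self ht
      have hmt := hmem t ht'
      have hmt' := hmem' t ht'
      have h1 : DifferentiableAt ℝ (fun s => Z (s + L)) t :=
        (hdiff (t+L) hmt').comp t (differentiableAt_fun_id.add_const L)
      have hd : deriv (fun s => Z (s + L) - Z s) t = deriv Z (t + L) - deriv Z t := by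
        rw [deriv_fun_sub h1 (hdiff t hmt)]
        congr 1
        exact deriv_comp_add_const Z L t
      rw [hd]
      have := hanti hmt hmt' (by linarith)
      linarith
  have := key ⟨le_rfl, hab⟩ ⟨hab, le_rfl⟩ hab
  simpa using this

private lemma convexA (Z : ℝ → ℝ)
    (hdiff : ∀ θ ∈ Ioo (0:ℝ) (2*π), DifferentiableAt ℝ Z θ)
    (hmono : MonotoneOn (deriv Z) (Ioo (0:ℝ) (2*π)))
    (hZm : MonotoneOn Z (Ioo (0:ℝ) (2*π)))
    {v₁ v₂ w₁ w₂ : ℝ} (hv₁ : v₁ ∈ Ioo (0:ℝ) (2*π)) (hv₂ : v₂ ∈ Ioo (0:ℝ) (2*π))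
    (hw₁ : w₁ ∈ Ioo (0:ℝ) (2*π)) (hw₂ : w₂ ∈ Ioo (0:ℝ) (2*π))
    (h12v : v₁ ≤ v₂) (hvw : v₁ ≤ w₁) (hlen : v₂ - v₁ ≤ w₂ - w₁) :
    Z v₂ - Z v₁ ≤ Z w₂ - Z w₁ := by
  set L := v₂ - v₁ with hLdef
  have hL : 0 ≤ L := by simp only [hLdef]; linarith
  have h1 : Z v₂ - Z v₁ = Z (v₁ + L) - Z v₁ := by rw [hLdef]; ring_nf
  have hwL : w₁ + L ∈ Ioo (0:ℝ) (2*π) := ⟨by have := hw₁.1; linarith,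
    by have := hw₂.2; linarith⟩
  have h2 : Z (v₁ + L) - Z v₁ ≤ Z (w₁ + L) - Z w₁ :=
    incr_mono Z hdiff hmono hL hv₁.1 hvw (by have := hw₂.2; linarith)
  have h3 : Z (w₁ + L) ≤ Z w₂ := hZm hwL hw₂ (by linarith)
  linarith [h1, h2, h3]

private lemma concaveA (Z : ℝ → ℝ)
    (hdiff : ∀ θ ∈ Ioo (0:ℝ) (2*π), DifferentiableAt ℝ Z θ)
    (hanti : AntitoneOn (deriv Z) (Ioo (0:ℝ) (2*π)))
    (hZm : MonotoneOn Z (Ioo (0:ℝ) (2*π)))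
    {v₁ v₂ w₁ w₂ : ℝ} (hv₁ : v₁ ∈ Ioo (0:ℝ) (2*π)) (hv₂ : v₂ ∈ Ioo (0:ℝ) (2*π))
    (hw₁ : w₁ ∈ Ioo (0:ℝ) (2*π)) (hw₂ : w₂ ∈ Ioo (0:ℝ) (2*π))
    (h12v : v₁ ≤ v₂) (hvw₂ : v₂ ≤ w₂) (hlen : w₂ - w₁ ≤ v₂ - v₁) :
    Z w₂ - Z w₁ ≤ Z v₂ - Z v₁ := by
  set L := v₂ - v₁ with hLdef
  have hL : 0 ≤ L := by simp only [hLdef]; linarith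
  have hbmem : w₂ - L ∈ Ioo (0:ℝ) (2*π) := ⟨by have := hv₁.1; simp only [hLdef]; linarith,
    by have := hw₂.2; simp only [hLdef]; linarith⟩
  have h1 : Z (w₂ - L) ≤ Z w₁ := hZm hbmem hw₁ (by simp only [hLdef]; linarith)
  have h2 : Z (w₂ - L + L) - Z (w₂ - L) ≤ Z (v₁ + L) - Z v₁ :=
    incr_anti Z hdiff hanti hL hv₁.1 (by simp only [hLdef]; linarith)
      (by have := hw₂.2; simp only [hLdef]; linarith)
  have h3 : w₂ - L + L = w₂ := by ring
  have h4 : v₁ + L = v₂ := by rw [hLdef]; ring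
  rw [h3, h4] at h2
  linarith

private noncomputable def Wseq (c d : ℝ) (m : ℕ) (T : ℕ → ℝ) : ℕ → ℝ :=
  fun k => if k = 0 then c else
    if k ≤ m + 1 then 2*π - T m + (if k = 1 then 0 else T (k-2)) else d

private lemma Wseq_eval0 (c d : ℝ) (m : ℕ) (T : ℕ → ℝ) : Wseq c d m T 0 = c := by
  simp [Wseq]

private lemma Wseq_eval1 (c d : ℝ) (m : ℕ) (T : ℕ → ℝ) : Wseq c d m T 1 = 2*π - T m := by
  unfold Wseq
  rw [if_neg one_ne_zero, if_pos (by omega), if_pos rfl, add_zero]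

private lemma Wseq_eval_mid (c d : ℝ) (m : ℕ) (T : ℕ → ℝ) (k : ℕ) (h1 : 2 ≤ k)
    (h2 : k ≤ m + 1) : Wseq c d m T k = 2*π - T m + T (k-2) := by
  unfold Wseq
  rw [if_neg (by omega), if_pos h2, if_neg (by omega)]

private lemma Wseq_eval_top (c d : ℝ) (m : ℕ) (T : ℕ → ℝ) (k : ℕ) (h : m + 2 ≤ k) :
    Wseq c d m T k = d := by
  unfold Wseq
  rw [if_neg (by omega), if_neg (by omega)]

private lemma Wseq_facts (c d : ℝ) (m : ℕ) (T : ℕ → ℝ)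
    (hTpos : ∀ k, 0 < T k) (hTmono : ∀ j k, j < k → k ≤ m → T j < T k) (hTm2 : T m < 2*π)
    (hc0 : 0 < c) (hcT : c < 2*π - T m)
    (hdT : 2*π - T m + (if m = 0 then 0 else T (m-1)) < d) (hd2 : d < 2*π) :
    (∀ k, k ≤ m + 2 → Wseq c d m T k ∈ Ioo (0:ℝ) (2*π)) ∧
    (∀ k, k < m + 2 → Wseq c d m T k < Wseq c d m T (k+1)) := by
  have hif : (0:ℝ) ≤ if m = 0 then 0 else T (m-1) := by
    split_ifs
    · exact le_rfl
    · exact (hTpos _).le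
  constructor
  · intro k hk
    simp only [Set.mem_Ioo]
    rcases Nat.eq_zero_or_pos k with rfl | hk1
    · rw [Wseq_eval0]; exact ⟨hc0, by linarith [hTpos m]⟩
    rcases eq_or_ne k 1 with rfl | h1
    · rw [Wseq_eval1]; exact ⟨by linarith, by linarith [hTpos m]⟩
    rcases Nat.lt_or_ge k (m+2) with hmid | htop
    · rw [Wseq_eval_mid c d m T k (by omega) (by omega)]
      have h2 := hTmono (k-2) m (by omega) le_rfl
      exact ⟨by linarith [hTpos (k-2)], by linarith⟩
    · rw [Wseq_eval_top c d m T k htop]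
      exact ⟨by linarith, hd2⟩
  · intro k hk
    rcases Nat.lt_or_ge (k+1) (m+2) with htop | htop
    · rcases eq_or_ne k 0 with rfl | h0
      · rw [Wseq_eval0, Wseq_eval1]; linarith
      rcases eq_or_ne k 1 with rfl | h1
      · rw [Wseq_eval1, Wseq_eval_mid c d m T 2 le_rfl (by omega)]
        have := hTpos 0
        norm_num
        linarith
      · rw [Wseq_eval_mid c d m T k (by omega) (by omega),
            Wseq_eval_mid c d m T (k+1) (by omega) (by omega)]
        have := hTmono (k-2) (k+1-2) (by omega) (by omega)
        linarith
    · have hk1 : k = m + 1 := by omega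
      subst hk1
      rw [Wseq_eval_top c d m T (m+1+1) (by omega)]
      rcases eq_or_ne m 0 with rfl | hm
      · rw [Wseq_eval1]
        norm_num at hdT
        linarith
      · rw [Wseq_eval_mid c d m T (m+1) (by omega) le_rfl]
        rw [if_neg hm] at hdT
        have h3 : m + 1 - 2 = m - 1 := by omega
        rw [h3]
        linarith

private lemma peel2 (n : ℕ) (f : ℕ → ℝ) :
    ∑ i ∈ Finset.range (n+2), f i = ((∑ i ∈ Finset.range n, f (i+2)) + f 1) + f 0 := by
  rw [Finset.sum_range_succ' f (n+1), Finset.sum_range_succ' (fun i => f (i+1)) n]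

private lemma peelFB (n : ℕ) (f : ℕ → ℝ) :
    ∑ i ∈ Finset.range (n+2), f i = ((∑ i ∈ Finset.range n, f (i+1)) + f (n+1)) + f 0 := by
  rw [Finset.sum_range_succ' f (n+1), Finset.sum_range_succ (fun i => f (i+1)) n]

/-- Theorem (firing map contraction for monotone decreasing PRC):
if the finite PRC `Z` is C², order-preserving (`Z' > −1`), monotone increasing
(`Z' > 0`) and of constant convexity on `(0,2π)`, then the `(N−1)`-dimensional
firing map is expanding on the cone with respect to the 1-norm. -/
theorem firing_map_expanding
    (N : ℕ) (hN : 1 < N) (Z : ℝ → ℝ)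
    (hZC2 : ContDiffOn ℝ 2 Z (Icc 0 (2 * π)))
    (hZord : ∀ θ ∈ Ioo (0 : ℝ) (2 * π), -1 < deriv Z θ)
    (hZmono : ∀ θ ∈ Ioo (0 : ℝ) (2 * π), 0 < deriv Z θ)
    (hZconv : (∀ θ ∈ Ioo (0 : ℝ) (2 * π), 0 < deriv (deriv Z) θ) ∨
              (∀ θ ∈ Ioo (0 : ℝ) (2 * π), deriv (deriv Z) θ < 0))
    (x y : Fin (N - 1) → ℝ)
    (hx : x ∈ firingCone) (hy : y ∈ firingCone) (hxy : x ≠ y)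
    (hHx : firingMap Z x ∈ firingCone) (hHy : firingMap Z y ∈ firingCone) :
    norm1 (x - y) < norm1 (firingMap Z x - firingMap Z y) := by
  obtain ⟨m, rfl⟩ : ∃ m, N = m + 2 := ⟨N - 2, by omega⟩
  obtain ⟨hxpos, hxmono, hxlt⟩ := hx
  obtain ⟨hypos, hymono, hylt⟩ := hy
  have hπ : (0:ℝ) < π := Real.pi_pos
  -- analytic facts
  have hdiffAt : ∀ θ ∈ Ioo (0:ℝ) (2*π), DifferentiableAt ℝ Z θ := by
    intro θ hθ
    have h1 : DifferentiableOn ℝ Z (Icc 0 (2*π)) := hZC2.differentiableOn (by norm_num)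
    exact (h1 θ (Ioo_subset_Icc_self hθ)).differentiableAt (Icc_mem_nhds hθ.1 hθ.2)
  have hcont : ContinuousOn Z (Ioo (0:ℝ) (2*π)) := fun θ hθ =>
    (hdiffAt θ hθ).continuousAt.continuousWithinAt
  have hZsm : StrictMonoOn Z (Ioo (0:ℝ) (2*π)) := by
    apply strictMonoOn_of_deriv_pos (convex_Ioo _ _) hcont
    rw [interior_Ioo]; exact hZmono
  have hZm : MonotoneOn Z (Ioo (0:ℝ) (2*π)) := hZsm.monotoneOn
  have hderivCont : ContinuousOn (deriv Z) (Ioo (0:ℝ) (2*π)) :=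
    (hZC2.mono Ioo_subset_Icc_self).continuousOn_deriv_of_isOpen isOpen_Ioo (by norm_num)
  -- extended sequences
  set X : ℕ → ℝ := fun k => x ⟨min k m, by omega⟩ with hXdef
  set Y : ℕ → ℝ := fun k => y ⟨min k m, by omega⟩ with hYdef
  have hXx : ∀ k (hk : k ≤ m), X k = x ⟨k, by omega⟩ := by
    intro k hk
    simp only [hXdef]
    congr 1
    exact Fin.ext (by simpa using min_eq_left hk)
  have hYy : ∀ k (hk : k ≤ m), Y k = y ⟨k, by omega⟩ := by
    intro k hk
    simp only [hYdef]
    congr 1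
    exact Fin.ext (by simpa using min_eq_left hk)
  have hXpos : ∀ k, 0 < X k := fun k => by simp only [hXdef]; exact hxpos _
  have hYpos : ∀ k, 0 < Y k := fun k => by simp only [hYdef]; exact hypos _
  have hXlt : ∀ k, X k < 2*π := fun k => by
    simp only [hXdef]; have := hxlt ⟨min k m, by omega⟩; linarith
  have hYlt : ∀ k, Y k < 2*π := fun k => by
    simp only [hYdef]; have := hylt ⟨min k m, by omega⟩; linarith
  have hXmono : ∀ j k, j < k → k ≤ m → X j < X k := by
    intro j k hjk hk
    simp only [hXdef]
    exact hxmono (by rw [Fin.mk_lt_mk]; omega)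
  have hYmono : ∀ j k, j < k → k ≤ m → Y j < Y k := by
    intro j k hjk hk
    simp only [hYdef]
    exact hymono (by rw [Fin.mk_lt_mk]; omega)
  -- endpoints
  set c : ℝ := min (2*π - X m) (2*π - Y m) / 2 with hcdef
  set d : ℝ := (max (2*π - X m + (if m = 0 then 0 else X (m-1)))
                    (2*π - Y m + (if m = 0 then 0 else Y (m-1))) + 2*π) / 2 with hddef
  have hminpos : 0 < min (2*π - X m) (2*π - Y m) :=
    lt_min (by have := hXlt m; linarith) (by have := hYlt m; linarith)
  have hc0 : 0 < c := by rw [hcdef]; linarith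
  have hcX : c < 2*π - X m := by
    rw [hcdef]
    have := min_le_left (2*π - X m) (2*π - Y m)
    linarith
  have hcY : c < 2*π - Y m := by
    rw [hcdef]
    have := min_le_right (2*π - X m) (2*π - Y m)
    linarith
  have hXm1 : 2*π - X m + (if m = 0 then 0 else X (m-1)) < 2*π := by
    split_ifs with h
    · have := hXpos m; linarith
    · have := hXmono (m-1) m (by omega) le_rfl; linarith
  have hYm1 : 2*π - Y m + (if m = 0 then 0 else Y (m-1)) < 2*π := by
    split_ifs with h
    · have := hYpos m; linarith
    · have := hYmono (m-1) m (by omega) le_rfl; linarith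
  have hmaxlt : max (2*π - X m + (if m = 0 then 0 else X (m-1)))
      (2*π - Y m + (if m = 0 then 0 else Y (m-1))) < 2*π := max_lt hXm1 hYm1
  have hdX : 2*π - X m + (if m = 0 then 0 else X (m-1)) < d := by
    rw [hddef]
    have := le_max_left (2*π - X m + (if m = 0 then 0 else X (m-1)))
      (2*π - Y m + (if m = 0 then 0 else Y (m-1)))
    linarith
  have hdY : 2*π - Y m + (if m = 0 then 0 else Y (m-1)) < d := by
    rw [hddef]
    have := le_max_right (2*π - X m + (if m = 0 then 0 else X (m-1)))
      (2*π - Y m + (if m = 0 then 0 else Y (m-1)))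
    linarith
  have hd2 : d < 2*π := by rw [hddef]; linarith
  obtain ⟨hWmemX, hWmonoX⟩ := Wseq_facts c d m X hXpos hXmono (hXlt m) hc0 hcX hdX hd2
  obtain ⟨hWmemY, hWmonoY⟩ := Wseq_facts c d m Y hYpos hYmono (hYlt m) hc0 hcY hdY hd2
  set pp : ℕ → ℝ := fun k => Wseq c d m X k - Wseq c d m Y k with hppdef
  set gg : ℕ → ℝ := fun k => Z (Wseq c d m X k) - Z (Wseq c d m Y k) with hggdef
  have hpp0 : pp 0 = 0 := by simp [hppdef, Wseq_eval0]
  have hppn : pp (m+2) = 0 := by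
    simp [hppdef, Wseq_eval_top c d m X (m+2) le_rfl, Wseq_eval_top c d m Y (m+2) le_rfl]
  have hsign : ∀ i, i ≤ m+2 →
      ((0 < pp i → 0 < gg i) ∧ (pp i < 0 → gg i < 0) ∧ (pp i = 0 → gg i = 0)) := by
    intro i hi
    have hwk := hWmemX i hi
    have hvk := hWmemY i hi
    refine ⟨?_, ?_, ?_⟩ <;> intro h <;> simp only [hppdef, hggdef] at h ⊢
    · have := hZsm hvk hwk (by linarith)
      linarith
    · have := hZsm hwk hvk (by linarith)
      linarith
    · have heq : Wseq c d m X i = Wseq c d m Y i := by linarith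
      rw [heq, sub_self]
  have hne : ∃ j, j ≤ m+2 ∧ pp j ≠ 0 := by
    by_cases hAB : X m = Y m
    · obtain ⟨i, hi⟩ := Function.ne_iff.mp hxy
      have him : (i:ℕ) ≤ m := by have := i.isLt; omega
      rcases eq_or_ne (i:ℕ) m with he | he
      · exfalso
        apply hi
        have h1 : x i = X m := by
          rw [hXx m le_rfl]; congr 1; exact Fin.ext (by simp [he])
        have h2 : y i = Y m := by
          rw [hYy m le_rfl]; congr 1; exact Fin.ext (by simp [he])
        rw [h1, h2, hAB]
      · refine ⟨(i:ℕ)+2, by omega, ?_⟩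
        simp only [hppdef]
        rw [Wseq_eval_mid c d m X ((i:ℕ)+2) (by omega) (by omega),
            Wseq_eval_mid c d m Y ((i:ℕ)+2) (by omega) (by omega)]
        have h3 : (i:ℕ)+2-2 = (i:ℕ) := by omega
        rw [h3]
        have h4 : X (i:ℕ) = x i := by rw [hXx _ him]
        have h5 : Y (i:ℕ) = y i := by rw [hYy _ him]
        intro hcontra
        apply hi
        rw [← h4, ← h5]
        have : X (i:ℕ) = Y (i:ℕ) := by rw [hAB] at hcontra; linarith
        linarith
    · refine ⟨1, by omega, ?_⟩
      simp only [hppdef]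
      rw [Wseq_eval1, Wseq_eval1]
      intro h
      apply hAB
      linarith
  -- the core inequality
  have main : ∑ i ∈ Finset.range (m+2), |pp (i+1) - pp i| <
      ∑ i ∈ Finset.range (m+2), |pp (i+1) + gg (i+1) - (pp i + gg i)| := by
    rcases hZconv with hconv | hconc
    · have hdm : MonotoneOn (deriv Z) (Ioo (0:ℝ) (2*π)) := by
        apply StrictMonoOn.monotoneOn
        apply strictMonoOn_of_deriv_pos (convex_Ioo _ _) hderivCont
        rw [interior_Ioo]; exact hconv
      apply sum_star (m+2) pp gg hsign ?_ ?_ hpp0 hppn hne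
      · intro i hi h1 h2
        simp only [hppdef] at h1 h2
        simp only [hggdef]
        have := convexA Z hdiffAt hdm hZm (hWmemY i (by omega)) (hWmemY (i+1) (by omega))
          (hWmemX i (by omega)) (hWmemX (i+1) (by omega)) (hWmonoY i hi).le
          (by linarith) (by linarith)
        linarith
      · intro i hi h1 h2
        simp only [hppdef] at h1 h2
        simp only [hggdef]
        have := convexA Z hdiffAt hdm hZm (hWmemX i (by omega)) (hWmemX (i+1) (by omega))
          (hWmemY i (by omega)) (hWmemY (i+1) (by omega)) (hWmonoX i hi).le
          (by linarith) (by linarith)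
        linarith
    · have hda : AntitoneOn (deriv Z) (Ioo (0:ℝ) (2*π)) := by
        apply StrictAntiOn.antitoneOn
        apply strictAntiOn_of_deriv_neg (convex_Ioo _ _) hderivCont
        rw [interior_Ioo]; exact hconc
      have hA' : ∀ i, i < m+2 → 0 ≤ pp (m+2-i) → pp (m+2-i) ≤ pp (m+2-(i+1)) →
          gg (m+2-i) ≤ gg (m+2-(i+1)) := by
        intro i hi h1 h2
        have hk : m+2-(i+1) = m+1-i := by omega
        have hk2 : m+2-i = (m+1-i)+1 := by omega
        rw [hk] at h2 ⊢
        rw [hk2] at h1 h2 ⊢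
        have hklt : m+1-i < m+2 := by omega
        simp only [hppdef] at h1 h2
        simp only [hggdef]
        have := concaveA Z hdiffAt hda hZm (hWmemY (m+1-i) (by omega))
          (hWmemY (m+1-i+1) (by omega)) (hWmemX (m+1-i) (by omega))
          (hWmemX (m+1-i+1) (by omega)) (hWmonoY (m+1-i) hklt).le
          (by linarith) (by linarith)
        linarith
      have hB' : ∀ i, i < m+2 → pp (m+2-i) ≤ 0 → pp (m+2-(i+1)) ≤ pp (m+2-i) →
          gg (m+2-(i+1)) ≤ gg (m+2-i) := by
        intro i hi h1 h2
        have hk : m+2-(i+1) = m+1-i := by omega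
        have hk2 : m+2-i = (m+1-i)+1 := by omega
        rw [hk] at h2 ⊢
        rw [hk2] at h1 h2 ⊢
        have hklt : m+1-i < m+2 := by omega
        simp only [hppdef] at h1 h2
        simp only [hggdef]
        have := concaveA Z hdiffAt hda hZm (hWmemX (m+1-i) (by omega))
          (hWmemX (m+1-i+1) (by omega)) (hWmemY (m+1-i) (by omega))
          (hWmemY (m+1-i+1) (by omega)) (hWmonoX (m+1-i) hklt).le
          (by linarith) (by linarith)
        linarith
      have hex' : ∃ j, j ≤ m+2 ∧ pp (m+2-j) ≠ 0 := by
        obtain ⟨j0, hj0, hpj0⟩ := hne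
        refine ⟨m+2-j0, by omega, ?_⟩
        rw [show m+2-(m+2-j0) = j0 by omega]
        exact hpj0
      have H := sum_star (m+2) (fun i => pp (m+2-i)) (fun i => gg (m+2-i))
        (fun i hi => hsign (m+2-i) (by omega)) hA' hB'
        (by simpa using hppn) (by simpa using hpp0) hex'
      have H' : ∑ i ∈ Finset.range (m+2), |pp (m+2-(i+1)) - pp (m+2-i)| <
          ∑ i ∈ Finset.range (m+2),
            |pp (m+2-(i+1)) + gg (m+2-(i+1)) - (pp (m+2-i) + gg (m+2-i))| := H
      rw [sum_reflect (m+2) pp, sum_reflect2 (m+2) pp gg] at H'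
      exact H'
  -- expression of the norms as telescoping sums
  have hnorm : ∀ (q : Fin (m+2-1) → ℝ), norm1 q =
      |q ⟨0, by omega⟩| + |q ⟨m, by omega⟩| +
      ∑ i ∈ Finset.range m, |q ⟨min i (m-1), by omega⟩ - q ⟨min (i+1) m, by omega⟩| := by
    intro q
    unfold norm1
    rw [dif_pos (by omega : 0 < m + 2 - 1)]
    congr 1
    refine (Finset.sum_congr rfl (fun k _ => ?_)).trans
      ((Fin.sum_univ_eq_sum_range
        (fun j => |q ⟨min j (m-1), by omega⟩ - q ⟨min (j+1) m, by omega⟩|)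
        (m+2-1-1)).trans ?_)
    · have hk := k.isLt
      have h1 : min (k:ℕ) (m-1) = (k:ℕ) := by omega
      have h2 : min ((k:ℕ)+1) m = (k:ℕ)+1 := by omega
      simp only [h1, h2]
    · rfl
  -- the key evaluation of the firing map
  have keyH : ∀ (t : Fin (m+2-1) → ℝ) (T : ℕ → ℝ),
      (∀ k (hk : k ≤ m), T k = t ⟨k, by omega⟩) →
      ∀ j (hj : j ≤ m), firingMap Z t ⟨j, by omega⟩ =
        Wseq c d m T (j+1) + Z (Wseq c d m T (j+1)) := by
    intro t T hTt j hj
    rcases eq_or_ne j 0 with rfl | hj0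
    · have hF0 : firingMap Z t ⟨0, by omega⟩ =
          firingScalar Z (t ⟨m, by omega⟩ - 0) := rfl
      rw [hF0, Wseq_eval1]
      unfold firingScalar
      rw [← hTt m le_rfl]
      have harg : 2*π - (T m - 0) = 2*π - T m := by ring
      rw [harg]
    · have hFj : firingMap Z t ⟨j, by omega⟩ =
          firingScalar Z (t ⟨m, by omega⟩ - t ⟨j-1, by omega⟩) := by
        unfold firingMap
        rw [dif_neg (by simpa using hj0)]
        rfl
      rw [hFj, Wseq_eval_mid c d m T (j+1) (by omega) (by omega)]
      unfold firingScalar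
      rw [← hTt m le_rfl, ← hTt (j-1) (by omega)]
      have hsub : j + 1 - 2 = j - 1 := by omega
      rw [hsub]
      have harg : 2*π - (T m - T (j-1)) = 2*π - T m + T (j-1) := by ring
      rw [harg]
  have Eq1 : norm1 (x - y) = ∑ i ∈ Finset.range (m+2), |pp (i+1) - pp i| := by
    rw [hnorm (x - y), peel2 m (fun i => |pp (i+1) - pp i|)]
    beta_reduce
    have e1 : |pp (0+1) - pp 0| = |(x - y) (⟨m, by omega⟩ : Fin (m+2-1))| := by
      have h1 : pp (0+1) - pp 0 = -((x - y) (⟨m, by omega⟩ : Fin (m+2-1))) := by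
        simp only [hppdef, Pi.sub_apply]
        rw [Wseq_eval0, Wseq_eval0, Wseq_eval1, Wseq_eval1,
          ← hXx m le_rfl, ← hYy m le_rfl]
        ring
      rw [h1, abs_neg]
    have e2 : |pp (1+1) - pp 1| = |(x - y) (⟨0, by omega⟩ : Fin (m+2-1))| := by
      have h1 : pp (1+1) - pp 1 = (x - y) (⟨0, by omega⟩ : Fin (m+2-1)) := by
        simp only [hppdef, Pi.sub_apply]
        rcases Nat.eq_zero_or_pos m with rfl | hm
        · rw [Wseq_eval_top c d 0 X 2 le_rfl, Wseq_eval_top c d 0 Y 2 le_rfl,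
            Wseq_eval1, Wseq_eval1, ← hXx 0 le_rfl, ← hYy 0 le_rfl]
          ring
        · rw [Wseq_eval_mid c d m X 2 le_rfl (by omega),
            Wseq_eval_mid c d m Y 2 le_rfl (by omega), Wseq_eval1, Wseq_eval1,
            ← hXx 0 (by omega), ← hYy 0 (by omega)]
          norm_num
          ring
      rw [h1]
    have e3 : ∑ i ∈ Finset.range m,
        |(x - y) (⟨min i (m-1), by omega⟩ : Fin (m+2-1)) -
          (x - y) (⟨min (i+1) m, by omega⟩ : Fin (m+2-1))| =
        ∑ i ∈ Finset.range m, |pp (i+2+1) - pp (i+2)| := by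
      apply Finset.sum_congr rfl
      intro i hi
      simp only [Finset.mem_range] at hi
      have hmin1 : min i (m-1) = i := by omega
      have hmin2 : min (i+1) m = i+1 := by omega
      simp only [hmin1, hmin2]
      have h1 : pp (i+2+1) - pp (i+2) =
          -((x - y) (⟨i, by omega⟩ : Fin (m+2-1)) -
            (x - y) (⟨i+1, by omega⟩ : Fin (m+2-1))) := by
        simp only [hppdef, Pi.sub_apply]
        rw [Wseq_eval_mid c d m X (i+2) (by omega) (by omega),
            Wseq_eval_mid c d m Y (i+2) (by omega) (by omega)]
        have hi2 : i+2-2 = i := by omega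
        rw [hi2]
        rcases Nat.lt_or_ge (i+2+1) (m+2) with hlt | hge
        · rw [Wseq_eval_mid c d m X (i+2+1) (by omega) (by omega),
              Wseq_eval_mid c d m Y (i+2+1) (by omega) (by omega)]
          have hi3 : i+2+1-2 = i+1 := by omega
          rw [hi3, ← hXx i (by omega), ← hYy i (by omega),
            ← hXx (i+1) (by omega), ← hYy (i+1) (by omega)]
          ring
        · have him : i + 1 = m := by omega
          rw [Wseq_eval_top c d m X (i+2+1) (by omega),
              Wseq_eval_top c d m Y (i+2+1) (by omega)]
          have h6 : x (⟨i+1, by omega⟩ : Fin (m+2-1)) = X m := by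
            rw [hXx m le_rfl]
            exact congrArg x (Fin.ext (by simp [him]))
          have h7 : y (⟨i+1, by omega⟩ : Fin (m+2-1)) = Y m := by
            rw [hYy m le_rfl]
            exact congrArg y (Fin.ext (by simp [him]))
          rw [← hXx i (by omega), ← hYy i (by omega), h6, h7]
          ring
      rw [h1, abs_neg]
    rw [e3.symm]
    rw [e1, e2]
    ring
  have Eq2 : norm1 (firingMap Z x - firingMap Z y) =
      ∑ i ∈ Finset.range (m+2), |pp (i+1) + gg (i+1) - (pp i + gg i)| := by
    rw [hnorm (firingMap Z x - firingMap Z y),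
      peelFB m (fun i => |pp (i+1) + gg (i+1) - (pp i + gg i)|)]
    beta_reduce
    have hq : ∀ j (hj : j ≤ m),
        (firingMap Z x - firingMap Z y) (⟨j, by omega⟩ : Fin (m+2-1)) =
        pp (j+1) + gg (j+1) := by
      intro j hj
      simp only [Pi.sub_apply]
      rw [keyH x X hXx j hj, keyH y Y hYy j hj]
      simp only [hppdef, hggdef]
      ring
    have e1 : |pp (0+1) + gg (0+1) - (pp 0 + gg 0)| =
        |(firingMap Z x - firingMap Z y) (⟨0, by omega⟩ : Fin (m+2-1))| := by
      have h0 : pp 0 + gg 0 = 0 := by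
        simp only [hppdef, hggdef]
        rw [Wseq_eval0, Wseq_eval0]
        ring
      rw [h0, sub_zero, hq 0 (by omega)]
    have e2 : |pp (m+1+1) + gg (m+1+1) - (pp (m+1) + gg (m+1))| =
        |(firingMap Z x - firingMap Z y) (⟨m, by omega⟩ : Fin (m+2-1))| := by
      have htop : pp (m+1+1) + gg (m+1+1) = 0 := by
        simp only [hppdef, hggdef]
        rw [Wseq_eval_top c d m X (m+1+1) (by omega), Wseq_eval_top c d m Y (m+1+1) (by omega)]
        ring
      have h1 : pp (m+1+1) + gg (m+1+1) - (pp (m+1) + gg (m+1)) =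
          -((firingMap Z x - firingMap Z y) (⟨m, by omega⟩ : Fin (m+2-1))) := by
        rw [hq m le_rfl]
        linarith [htop]
      rw [h1, abs_neg]
    have e3 : ∑ i ∈ Finset.range m,
        |(firingMap Z x - firingMap Z y) (⟨min i (m-1), by omega⟩ : Fin (m+2-1)) -
          (firingMap Z x - firingMap Z y) (⟨min (i+1) m, by omega⟩ : Fin (m+2-1))| =
        ∑ i ∈ Finset.range m, |pp (i+1+1) + gg (i+1+1) - (pp (i+1) + gg (i+1))| := by
      apply Finset.sum_congr rfl
      intro i hi
      simp only [Finset.mem_range] at hi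
      have hmin1 : min i (m-1) = i := by omega
      have hmin2 : min (i+1) m = i+1 := by omega
      simp only [hmin1, hmin2]
      rw [hq i (by omega), hq (i+1) (by omega), abs_sub_comm]
    rw [e3.symm, e1, e2]
    ring
  rw [Eq1, Eq2]
  exact main
end

section
/- Let N > 1 and let Z : [0,2π] → ℝ be a twice continuously differentiable finite phase response curve satisfying Z'(θ) > −1, Z'(θ) < 0, and either Z''(θ) > 0 for all θ ∈ (0,2π) or Z''(θ) < 0 for all θ ∈ (0,2π). Then the (N−1)-dimensional firing map H has at most one fixed point in the cone C_N (i.e., the phase-locked configuration of the network of N impulsively coupled oscillators is isolated/unique). -/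
open Real Set

/-- `u ↦ u + Z u` is strictly increasing on `(0,2π)` when `Z' > -1` there. -/
lemma firing_aux_smono (Z : ℝ → ℝ)
    (hZC2 : ContDiffOn ℝ 2 Z (Icc 0 (2 * π)))
    (hZord : ∀ θ ∈ Ioo (0 : ℝ) (2 * π), -1 < deriv Z θ) :
    StrictMonoOn (fun u => u + Z u) (Ioo 0 (2 * π)) := by
  apply strictMonoOn_of_deriv_pos (convex_Ioo _ _)
  · exact continuousOn_id.add (hZC2.continuousOn.mono Ioo_subset_Icc_self)
  · intro θ hθ
    rw [interior_Ioo] at hθ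
    have hd : DifferentiableAt ℝ Z θ :=
      (hZC2.differentiableOn (by norm_num)).differentiableAt
        (Icc_mem_nhds hθ.1 hθ.2)
    have hder : deriv (fun u => u + Z u) θ = 1 + deriv Z θ := by
      exact (((hasDerivAt_id' θ).add hd.hasDerivAt) :
        HasDerivAt (fun u => u + Z u) (1 + deriv Z θ) θ).deriv
    rw [hder]
    linarith [hZord θ hθ]

/-- If `x, y` are fixed points in the cone and `x` has smaller last coordinate,
then every coordinate of `y` is strictly below the corresponding one of `x`. -/
lemma firing_aux_all_lt {m : ℕ} (hm : 0 < m) (Z : ℝ → ℝ)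
    (hs : StrictMonoOn (fun u => u + Z u) (Ioo 0 (2 * π)))
    (x y : Fin m → ℝ) (hx : x ∈ firingCone) (hy : y ∈ firingCone)
    (hfx : firingMap Z x = x) (hfy : firingMap Z y = y)
    (hlt : x ⟨m - 1, Nat.sub_lt hm Nat.one_pos⟩ <
           y ⟨m - 1, Nat.sub_lt hm Nat.one_pos⟩) :
    ∀ j (hj : j < m), y ⟨j, hj⟩ < x ⟨j, hj⟩ := by
  set L : Fin m := ⟨m - 1, Nat.sub_lt hm Nat.one_pos⟩ with hL
  have hxL0 : 0 < x L := hx.1 L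
  have hxL2 : x L < 2 * π := hx.2.2 L
  have hyL0 : 0 < y L := hy.1 L
  have hyL2 : y L < 2 * π := hy.2.2 L
  have key : ∀ a b : ℝ, 0 < a → a < 2 * π → 0 < b → b < 2 * π → a < b →
      2 * π - b + Z (2 * π - b) < 2 * π - a + Z (2 * π - a) := by
    intro a b ha0 ha2 hb0 hb2 hab
    have := hs (show 2 * π - b ∈ Ioo (0:ℝ) (2*π) by constructor <;> linarith)
      (show 2 * π - a ∈ Ioo (0:ℝ) (2*π) by constructor <;> linarith)
      (by linarith)
    simpa using this
  intro j
  induction j with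
  | zero =>
    intro hj
    have ex : x ⟨0, hj⟩ = 2 * π - (x L - 0) + Z (2 * π - (x L - 0)) :=
      (congrFun hfx ⟨0, hj⟩).symm
    have ey : y ⟨0, hj⟩ = 2 * π - (y L - 0) + Z (2 * π - (y L - 0)) :=
      (congrFun hfy ⟨0, hj⟩).symm
    rw [ex, ey]
    exact key _ _ (by linarith) (by linarith) (by linarith) (by linarith) (by linarith)
  | succ j ih =>
    intro hj1
    have hjm : j < m := Nat.lt_of_succ_lt hj1
    have ihv : y ⟨j, hjm⟩ < x ⟨j, hjm⟩ := ih hjm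
    have hjlt : j < m - 1 := by omega
    have hxj_lt : x ⟨j, hjm⟩ < x L := hx.2.1 (Fin.mk_lt_mk.mpr hjlt)
    have hyj_lt : y ⟨j, hjm⟩ < y L := hy.2.1 (Fin.mk_lt_mk.mpr hjlt)
    have hxj0 : 0 < x ⟨j, hjm⟩ := hx.1 _
    have hyj0 : 0 < y ⟨j, hjm⟩ := hy.1 _
    have ex : x ⟨j + 1, hj1⟩ =
        2 * π - (x L - x ⟨j, hjm⟩) + Z (2 * π - (x L - x ⟨j, hjm⟩)) :=
      (congrFun hfx ⟨j + 1, hj1⟩).symm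
    have ey : y ⟨j + 1, hj1⟩ =
        2 * π - (y L - y ⟨j, hjm⟩) + Z (2 * π - (y L - y ⟨j, hjm⟩)) :=
      (congrFun hfy ⟨j + 1, hj1⟩).symm
    rw [ex, ey]
    exact key _ _ (by linarith) (by linarith) (by linarith) (by linarith) (by linarith)

/-- Theorem (uniqueness of the phase-locked configuration):
if the finite PRC `Z` is C², order-preserving (`Z' > −1`), monotone decreasing
(`Z' < 0`) and of constant convexity on `(0,2π)`, then the `(N−1)`-dimensional
firing map has at most one fixed point in the cone. -/
theorem firing_map_unique_fixed_point
    (N : ℕ) (hN : 1 < N) (Z : ℝ → ℝ)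
    (hZC2 : ContDiffOn ℝ 2 Z (Icc 0 (2 * π)))
    (hZord : ∀ θ ∈ Ioo (0 : ℝ) (2 * π), -1 < deriv Z θ)
    (hZmono : ∀ θ ∈ Ioo (0 : ℝ) (2 * π), deriv Z θ < 0)
    (hZconv : (∀ θ ∈ Ioo (0 : ℝ) (2 * π), 0 < deriv (deriv Z) θ) ∨
              (∀ θ ∈ Ioo (0 : ℝ) (2 * π), deriv (deriv Z) θ < 0))
    (x y : Fin (N - 1) → ℝ)
    (hx : x ∈ firingCone) (hy : y ∈ firingCone)
    (hfx : firingMap Z x = x) (hfy : firingMap Z y = y) :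
    x = y := by
  have hm : 0 < N - 1 := by omega
  have hs := firing_aux_smono Z hZC2 hZord
  set L : Fin (N - 1) := ⟨N - 1 - 1, Nat.sub_lt hm Nat.one_pos⟩ with hL
  have h1 : ¬ x L < y L := fun h =>
    lt_asymm h (firing_aux_all_lt hm Z hs x y hx hy hfx hfy h _ (Nat.sub_lt hm Nat.one_pos))
  have h2 : ¬ y L < x L := fun h =>
    lt_asymm h (firing_aux_all_lt hm Z hs y x hy hx hfy hfx h _ (Nat.sub_lt hm Nat.one_pos))
  have hLeq : x L = y L := le_antisymm (not_lt.mp h2) (not_lt.mp h1)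
  have key : ∀ j (hj : j < N - 1), x ⟨j, hj⟩ = y ⟨j, hj⟩ := by
    intro j
    induction j with
    | zero =>
      intro hj
      have ex : x ⟨0, hj⟩ = 2 * π - (x L - 0) + Z (2 * π - (x L - 0)) :=
        (congrFun hfx ⟨0, hj⟩).symm
      have ey : y ⟨0, hj⟩ = 2 * π - (y L - 0) + Z (2 * π - (y L - 0)) :=
        (congrFun hfy ⟨0, hj⟩).symm
      rw [ex, ey, hLeq]
    | succ j ih =>
      intro hj1
      have hjm : j < N - 1 := Nat.lt_of_succ_lt hj1
      have ex : x ⟨j + 1, hj1⟩ =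
          2 * π - (x L - x ⟨j, hjm⟩) + Z (2 * π - (x L - x ⟨j, hjm⟩)) :=
        (congrFun hfx ⟨j + 1, hj1⟩).symm
      have ey : y ⟨j + 1, hj1⟩ =
          2 * π - (y L - y ⟨j, hjm⟩) + Z (2 * π - (y L - y ⟨j, hjm⟩)) :=
        (congrFun hfy ⟨j + 1, hj1⟩).symm
      rw [ex, ey, hLeq, ih hjm]
  funext i
  have := key i.val i.isLt
  simpa using this
end

section
/- Let μ > 0, K > 0, and let (x₁, w₁, x₂, w₂) : I → ℝ⁴ be a differentiable solution of the resistively coupled van der Pol system ẋᵢ = −wᵢ + μ(xᵢ − xᵢ³/3) + K(x_j − xᵢ), ẇᵢ = xᵢ, for (i,j) ∈ {(1,2),(2,1)}. Define the incremental Lyapunov function V(t) = ½((x₁(t) − x₂(t))² + (w₁(t) − w₂(t))²). Then for all t ∈ I, V'(t) ≤ (μ − 2K)·(x₁(t) − x₂(t))². -/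
open Real Set

/-- Theorem (incremental Lyapunov inequality for resistively coupled van der
Pol oscillators): along any solution of the coupled system, the incremental
Lyapunov function `V = ½((x₁−x₂)² + (w₁−w₂)²)` satisfies
`V̇ ≤ (μ − 2K)(x₁−x₂)²`. -/
theorem coupled_vdp_lyapunov
    (μ K : ℝ) (hμ : 0 < μ) (hK : 0 < K)
    (I : Set ℝ) (x₁ w₁ x₂ w₂ : ℝ → ℝ)
    (hx₁ : ∀ t ∈ I, HasDerivAt x₁
      (-w₁ t + μ * (x₁ t - (x₁ t) ^ 3 / 3) + K * (x₂ t - x₁ t)) t)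
    (hw₁ : ∀ t ∈ I, HasDerivAt w₁ (x₁ t) t)
    (hx₂ : ∀ t ∈ I, HasDerivAt x₂
      (-w₂ t + μ * (x₂ t - (x₂ t) ^ 3 / 3) + K * (x₁ t - x₂ t)) t)
    (hw₂ : ∀ t ∈ I, HasDerivAt w₂ (x₂ t) t) :
    ∀ t ∈ I, ∃ d : ℝ,
      HasDerivAt (fun s => (1 / 2) * ((x₁ s - x₂ s) ^ 2 + (w₁ s - w₂ s) ^ 2)) d t ∧
      d ≤ (μ - 2 * K) * (x₁ t - x₂ t) ^ 2 := by
  intro t ht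
  have hx := (hx₁ t ht).sub (hx₂ t ht)
  have hw := (hw₁ t ht).sub (hw₂ t ht)
  have hV := ((hx.pow 2).add (hw.pow 2)).const_mul (1 / 2 : ℝ)
  refine ⟨_, hV, ?_⟩
  have hmono : (x₁ t - x₂ t) * ((x₁ t) ^ 3 - (x₂ t) ^ 3) ≥ 0 := by nlinarith [sq_nonneg (x₁ t - x₂ t), sq_nonneg (x₁ t + x₂ t), sq_nonneg (x₁ t), sq_nonneg (x₂ t)]
  norm_num only [Pi.sub_apply]
  nlinarith [mul_nonneg hμ.le hmono]
end

section
/- Let μ > 0 and K > 0 with 2K > μ, and let (x₁, w₁, x₂, w₂) : [0,∞) → ℝ⁴ be a differentiable solution of the resistively coupled van der Pol system ẋᵢ = −wᵢ + μ(xᵢ − xᵢ³/3) + K(x_j − xᵢ), ẇᵢ = xᵢ, for (i,j) ∈ {(1,2),(2,1)}. Then the two oscillators synchronize: lim_{t→∞} (x₁(t) − x₂(t)) = 0 and lim_{t→∞} (w₁(t) − w₂(t)) = 0. -/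
open Real Set Filter

set_option maxHeartbeats 1000000 in
set_option maxHeartbeats 1000000 in
lemma damped_osc_conv (c a b : ℝ) (hc : 0 < c) (ha : 0 < a) (hb : 0 < b)
    (e η h : ℝ → ℝ)
    (hh_cont : ContinuousOn h (Ici 0))
    (hh1 : ∀ t ∈ Ici (0:ℝ), c ≤ h t)
    (hh2 : ∀ t ∈ Ici (0:ℝ), h t ≤ a + b * t)
    (he : ∀ t ∈ Ici (0:ℝ), HasDerivAt e (-η t - h t * e t) t)
    (hη : ∀ t ∈ Ici (0:ℝ), HasDerivAt η (e t) t) :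
    Tendsto e atTop (nhds 0) ∧ Tendsto η atTop (nhds 0) := by
  have ftc : ∀ (F F' : ℝ → ℝ), (∀ t ∈ Ici (0:ℝ), HasDerivAt F (F' t) t) →
      ContinuousOn F' (Ici 0) → ∀ T, 0 ≤ T →
      ∫ t in (0:ℝ)..T, F' t = F T - F 0 := by
    intro F F' hF hF' T hT
    refine intervalIntegral.integral_eq_sub_of_hasDerivAt (fun t ht => hF t ?_) ?_
    · rw [uIcc_of_le hT] at ht; exact ht.1
    · exact (hF'.mono (by rw [uIcc_of_le hT]; exact fun s hs => hs.1)).intervalIntegrable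
  have ii : ∀ (f : ℝ → ℝ), ContinuousOn f (Ici 0) → ∀ T, 0 ≤ T →
      IntervalIntegrable f MeasureTheory.volume 0 T := by
    intro f hf T hT
    exact (hf.mono (by rw [uIcc_of_le hT]; exact fun s hs => hs.1)).intervalIntegrable
  have he_cont : ContinuousOn e (Ici 0) := fun t ht => (he t ht).continuousAt.continuousWithinAt
  have hη_cont : ContinuousOn η (Ici 0) := fun t ht => (hη t ht).continuousAt.continuousWithinAt
  -- energy
  set V : ℝ → ℝ := fun t => (e t * e t + η t * η t)/2 with hVdef
  set dV : ℝ → ℝ := fun t => -(h t * (e t * e t)) with hdVdef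
  have hV : ∀ t ∈ Ici (0:ℝ), HasDerivAt V (dV t) t := by
    intro t ht
    have h1 := (((he t ht).mul (he t ht)).add ((hη t ht).mul (hη t ht))).div_const 2
    refine h1.congr_deriv ?_
    simp only [hdVdef]; try ring
  have hdV_cont : ContinuousOn dV (Ici 0) := (hh_cont.mul (he_cont.mul he_cont)).neg
  have hVanti : AntitoneOn V (Ici 0) := by
    apply antitoneOn_of_deriv_nonpos (convex_Ici 0)
      (fun t ht => (hV t ht).continuousAt.continuousWithinAt)
    · rw [interior_Ici]
      exact fun t ht => (hV t (mem_Ici.mpr (mem_Ioi.mp ht).le)).differentiableAt.differentiableWithinAt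
    · rw [interior_Ici]
      intro t ht
      rw [(hV t (mem_Ici.mpr (mem_Ioi.mp ht).le)).deriv]
      have h1 : 0 < h t := lt_of_lt_of_le hc (hh1 t (mem_Ici.mpr (mem_Ioi.mp ht).le))
      simp only [hdVdef]
      nlinarith [sq_nonneg (e t)]
  have hV0 : ∀ t, 0 ≤ V t := by
    intro t; simp only [hVdef]; nlinarith [sq_nonneg (e t), sq_nonneg (η t)]
  have hVle : ∀ t ∈ Ici (0:ℝ), V t ≤ V 0 := fun t ht => hVanti self_mem_Ici ht ht
  have hMe : ∀ t ∈ Ici (0:ℝ), e t * e t ≤ 2 * V 0 := by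
    intro t ht; have := hVle t ht; simp only [hVdef] at this ⊢
    nlinarith [sq_nonneg (η t)]
  have hMη : ∀ t ∈ Ici (0:ℝ), η t * η t ≤ 2 * V 0 := by
    intro t ht; have := hVle t ht; simp only [hVdef] at this ⊢
    nlinarith [sq_nonneg (e t)]
  -- weight function ψ
  set ψ : ℝ → ℝ := fun t => (a + b*t)⁻¹ with hψdef
  set dψ : ℝ → ℝ := fun t => -(b/(a+b*t)^2) with hdψdef
  have hden : ∀ t ∈ Ici (0:ℝ), 0 < a + b*t := by
    intro t ht; have : 0 ≤ b * t := mul_nonneg hb.le ht; linarith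
  have hline : ∀ t : ℝ, HasDerivAt (fun s => a + b*s) b t := by
    intro t; simpa using ((hasDerivAt_id t).const_mul b).const_add a
  have hψderiv : ∀ t ∈ Ici (0:ℝ), HasDerivAt ψ (dψ t) t := by
    intro t ht
    have := (hline t).inv (ne_of_gt (hden t ht))
    refine this.congr_deriv ?_
    simp only [hdψdef]; try ring
  have hψpos : ∀ t ∈ Ici (0:ℝ), 0 < ψ t := fun t ht => inv_pos.mpr (hden t ht)
  have hψle : ∀ t ∈ Ici (0:ℝ), ψ t ≤ a⁻¹ := by
    intro t ht
    exact inv_anti₀ ha (by linarith [mul_nonneg hb.le ht])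
  have hψh : ∀ t ∈ Ici (0:ℝ), h t * ψ t ≤ 1 := by
    intro t ht
    rw [hψdef]
    calc h t * (a + b*t)⁻¹ ≤ (a + b*t) * (a + b*t)⁻¹ :=
          mul_le_mul_of_nonneg_right (hh2 t ht) (inv_nonneg.mpr (hden t ht).le)
      _ = 1 := mul_inv_cancel₀ (ne_of_gt (hden t ht))
  have hdψ_cont : ContinuousOn dψ (Ici 0) := by
    apply ContinuousOn.neg
    apply ContinuousOn.div continuousOn_const
    · fun_prop
    · intro t ht; exact pow_ne_zero 2 (ne_of_gt (hden t ht))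
  have hψ_cont : ContinuousOn ψ (Ici 0) :=
    fun t ht => (hψderiv t ht).continuousAt.continuousWithinAt
  -- cross term G
  set G : ℝ → ℝ := fun t => e t * η t * ψ t with hGdef
  set dG : ℝ → ℝ := fun t =>
    ((-η t - h t * e t) * η t + e t * e t) * ψ t + e t * η t * dψ t with hdGdef
  have hG : ∀ t ∈ Ici (0:ℝ), HasDerivAt G (dG t) t := by
    intro t ht
    have := ((he t ht).mul (hη t ht)).mul (hψderiv t ht)
    refine this.congr_deriv ?_
    all_goals (simp only [hdGdef, Pi.mul_apply]; try ring)
  have hdG_cont : ContinuousOn dG (Ici 0) := by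
    apply ContinuousOn.add
    · exact (((hη_cont.neg.sub (hh_cont.mul he_cont)).mul hη_cont).add
        (he_cont.mul he_cont)).mul hψ_cont
    · exact (he_cont.mul hη_cont).mul hdψ_cont
  have hGbd : ∀ t ∈ Ici (0:ℝ), |G t| ≤ 2 * V 0 * a⁻¹ := by
    intro t ht
    have h1 := hMe t ht; have h2 := hMη t ht
    have h3 := hψpos t ht; have h4 := hψle t ht
    have h5 : |e t * η t| ≤ 2 * V 0 := by
      rw [abs_mul]
      nlinarith [abs_nonneg (e t), abs_nonneg (η t), sq_abs (e t), sq_abs (η t),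
        sq_nonneg (|e t| - |η t|)]
    rw [hGdef, abs_mul, abs_of_pos h3]
    have hV0' : (0:ℝ) ≤ 2 * V 0 := by nlinarith [hV0 0]
    exact mul_le_mul h5 h4 h3.le hV0'
  -- log primitive of ψ
  set Flog : ℝ → ℝ := fun t => Real.log (a + b*t) / b with hFlogdef
  have hFlog : ∀ t ∈ Ici (0:ℝ), HasDerivAt Flog (ψ t) t := by
    intro t ht
    have := ((hline t).log (ne_of_gt (hden t ht))).div_const b
    rw [show ψ t = b / (a + b*t) / b by
      simp only [hψdef]
      rw [div_div]
      rw [mul_comm (a + b*t) b, div_mul_eq_div_div, div_self (ne_of_gt hb), one_div]]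
    exact this
  -- the master integral bound
  set C : ℝ := (4*a⁻¹/c + 1) * V 0 + 6 * (2 * V 0) * a⁻¹ with hCdef
  clear_value C
  have key : ∀ T, 0 ≤ T →
      ∫ t in (0:ℝ)..T, (e t * e t + η t * η t) * ψ t ≤ C := by
    intro T hT
    have hIV := ftc V dV hV hdV_cont T hT
    have hIψ := ftc ψ dψ hψderiv hdψ_cont T hT
    have hIG := ftc G dG hG hdG_cont T hT
    have int_dV := ii dV hdV_cont T hT
    have int_dψ := ii dψ hdψ_cont T hT
    have int_dG := ii dG hdG_cont T hT
    have intL := ii (fun t => (e t * e t + η t * η t) * ψ t)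
      (((he_cont.mul he_cont).add (hη_cont.mul hη_cont)).mul hψ_cont) T hT
    set K₁ : ℝ := 4*a⁻¹/c + 1 with hK₁def
    clear_value K₁
    set M2 : ℝ := 2 * V 0 with hM2def
    clear_value M2
    have intR : IntervalIntegrable
        (fun t => K₁ * (-dV t) + (2*M2) * (-dψ t) + (-2) * dG t)
        MeasureTheory.volume 0 T := by
      apply IntervalIntegrable.add
      apply IntervalIntegrable.add
      · exact int_dV.neg.const_mul _
      · exact int_dψ.neg.const_mul _
      · exact int_dG.const_mul _
    have hpt : ∀ t ∈ Icc (0:ℝ) T, (e t * e t + η t * η t) * ψ t ≤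
        K₁ * (-dV t) + (2*M2) * (-dψ t) + (-2) * dG t := by
      intro t ht'
      have ht : t ∈ Ici (0:ℝ) := ht'.1
      have h1 := hψpos t ht
      have h2 := hψle t ht
      have h3 := hψh t ht
      have h4 := hh1 t ht
      have h5 := hMe t ht
      have h6 := hMη t ht
      have hDpos : (0:ℝ) ≤ b/(a+b*t)^2 := by positivity
      have hh0 : (0:ℝ) ≤ h t := le_trans hc.le h4
      have ha1 : 0 ≤ h t * (e t + η t * ψ t)^2 := mul_nonneg hh0 (sq_nonneg _)
      have ha2 : h t * (η t * ψ t)^2 ≤ η t * η t * ψ t := by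
        have : h t * (η t * ψ t)^2 = (h t * ψ t) * (η t * η t * ψ t) := by ring
        rw [this]
        have hnn : 0 ≤ η t * η t * ψ t := mul_nonneg (mul_self_nonneg _) h1.le
        nlinarith
      have ha3 : 0 ≤ (b/(a+b*t)^2) * (e t + η t)^2 := mul_nonneg hDpos (sq_nonneg _)
      have ha4 : e t * e t * ψ t ≤ e t * e t * a⁻¹ :=
        mul_le_mul_of_nonneg_left h2 (mul_self_nonneg _)
      have haux : 4*a⁻¹*(e t * e t) ≤ 4*a⁻¹/c * (h t * (e t * e t)) := by
        rw [div_mul_eq_mul_div, le_div_iff₀ hc]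
        nlinarith [mul_le_mul_of_nonneg_left h4
          (mul_nonneg (by positivity) (mul_self_nonneg (e t)) : (0:ℝ) ≤ 4*a⁻¹*(e t * e t))]
      simp only [hdVdef, hdψdef, hdGdef, hK₁def, hM2def]
      nlinarith [ha1, ha2, ha3, ha4, haux, mul_self_nonneg (e t), mul_self_nonneg (η t)]
    have h1 : ∫ t in (0:ℝ)..T, (e t * e t + η t * η t) * ψ t ≤
        ∫ t in (0:ℝ)..T, (K₁ * (-dV t) + (2*M2) * (-dψ t) + (-2) * dG t) :=
      intervalIntegral.integral_mono_on hT intL intR hpt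
    have h2 : ∫ t in (0:ℝ)..T, (K₁ * (-dV t) + (2*M2) * (-dψ t) + (-2) * dG t)
        = K₁ * (-(V T - V 0)) + (2*M2) * (-(ψ T - ψ 0)) + (-2) * (G T - G 0) := by
      have iA : IntervalIntegrable (fun t => K₁ * (-dV t)) MeasureTheory.volume 0 T := by
        exact int_dV.neg.const_mul _
      have iB : IntervalIntegrable (fun t => (2*M2) * (-dψ t)) MeasureTheory.volume 0 T := by
        exact int_dψ.neg.const_mul _
      have iC : IntervalIntegrable (fun t => (-2:ℝ) * dG t) MeasureTheory.volume 0 T := by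
        exact int_dG.const_mul _
      rw [intervalIntegral.integral_add (iA.add iB) iC,
          intervalIntegral.integral_add iA iB,
          intervalIntegral.integral_const_mul, intervalIntegral.integral_const_mul,
          intervalIntegral.integral_const_mul]
      simp only [intervalIntegral.integral_neg, hIV, hIψ, hIG]
    rw [h2] at h1
    have hb1 := hGbd 0 self_mem_Ici
    have hb2 := hGbd T hT
    have hb3 := abs_le.mp hb1
    have hb4 := abs_le.mp hb2
    have hψT := hψpos T hT
    have hψ0 := hψle 0 self_mem_Ici
    have hVT := hV0 T
    have hK₁pos : (0:ℝ) ≤ K₁ := by rw [hK₁def]; positivity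
    have hM2pos : (0:ℝ) ≤ M2 := by rw [hM2def]; nlinarith [hV0 0]
    simp only [hCdef]
    nlinarith [h1, hb3.1, hb3.2, hb4.1, hb4.2,
      mul_le_mul_of_nonneg_left hVT hK₁pos,
      mul_le_mul_of_nonneg_left hψT.le hM2pos,
      mul_le_mul_of_nonneg_left hψ0 hM2pos]
  -- V tends to 0
  have key2 : ∀ ε, 0 < ε → ∃ N, 0 ≤ N ∧ V N < ε := by
    intro ε hε
    by_contra hcon
    push_neg at hcon
    set y : ℝ := b * (C/(2*ε) + 1) with hydef
    set T : ℝ := a * Real.exp y / b with hTdef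
    have hT0 : 0 ≤ T := by positivity
    have hbT : b * T = a * Real.exp y := by
      rw [hTdef]; field_simp
    have int1 := ii (fun t => 2*ε*ψ t) (continuousOn_const.mul hψ_cont) T hT0
    have int2 := ii (fun t => (e t * e t + η t * η t) * ψ t)
      (((he_cont.mul he_cont).add (hη_cont.mul hη_cont)).mul hψ_cont) T hT0
    have h1 : ∫ t in (0:ℝ)..T, 2*ε*ψ t ≤
        ∫ t in (0:ℝ)..T, (e t * e t + η t * η t) * ψ t := by
      apply intervalIntegral.integral_mono_on hT0 int1 int2
      intro t ht'
      have ht : t ∈ Ici (0:ℝ) := ht'.1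
      have hVt := hcon t ht
      have hψt := hψpos t ht
      have : 2 * V t = e t * e t + η t * η t := by simp only [hVdef]; ring
      nlinarith
    have h2 : ∫ t in (0:ℝ)..T, 2*ε*ψ t = 2*ε*(Flog T - Flog 0) := by
      rw [intervalIntegral.integral_const_mul, ftc Flog ψ hFlog hψ_cont T hT0]
    have h3 := key T hT0
    have h4 : C/(2*ε) + 1 ≤ Flog T - Flog 0 := by
      have hexp : a * Real.exp y ≤ a + b*T := by
        rw [hbT]; linarith
      have hlog : Real.log (a * Real.exp y) ≤ Real.log (a + b*T) :=
        Real.log_le_log (by positivity) hexp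
      rw [Real.log_mul (ne_of_gt ha) (Real.exp_ne_zero _), Real.log_exp] at hlog
      simp only [hFlogdef]
      rw [mul_zero, add_zero, div_sub_div_same, le_div_iff₀ hb]
      rw [hydef] at hlog
      linarith [hlog]
    have h5 : 2*ε*(C/(2*ε)+1) = C + 2*ε := by
      field_simp
    have h6 := mul_le_mul_of_nonneg_left h4 (by positivity : (0:ℝ) ≤ 2*ε)
    linarith [h1, h2, h3, h5, h6, hε]
  have hVtend : Tendsto V atTop (nhds 0) := by
    rw [Metric.tendsto_atTop]
    intro ε hε
    obtain ⟨N, hN0, hN⟩ := key2 ε hε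
    refine ⟨N, fun t ht => ?_⟩
    have ht0 : (0:ℝ) ≤ t := le_trans hN0 ht
    rw [Real.dist_eq, sub_zero, abs_of_nonneg (hV0 t)]
    exact lt_of_le_of_lt (hVanti hN0 ht0 ht) hN
  have sqtend : Tendsto (fun t => Real.sqrt (2 * V t)) atTop (nhds 0) := by
    have h1 : Tendsto (fun t => 2 * V t) atTop (nhds 0) := by
      simpa using hVtend.const_mul 2
    have h2 := (Real.continuous_sqrt.tendsto 0).comp h1
    rw [Real.sqrt_zero] at h2
    exact h2
  constructor
  · apply squeeze_zero_norm' _ sqtend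
    filter_upwards [eventually_ge_atTop (0:ℝ)] with t ht
    rw [Real.norm_eq_abs, ← Real.sqrt_sq_eq_abs]
    apply Real.sqrt_le_sqrt
    have := hV0 t; simp only [hVdef] at this ⊢
    nlinarith [sq_nonneg (η t)]
  · apply squeeze_zero_norm' _ sqtend
    filter_upwards [eventually_ge_atTop (0:ℝ)] with t ht
    rw [Real.norm_eq_abs, ← Real.sqrt_sq_eq_abs]
    apply Real.sqrt_le_sqrt
    have := hV0 t; simp only [hVdef] at this ⊢
    nlinarith [sq_nonneg (e t)]


set_option maxHeartbeats 1000000 in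
/-- Theorem (diffusive synchronization of two resistively coupled van der Pol
oscillators): if `2K > μ`, then along any solution of the coupled system
defined on `[0,∞)`, the differences `x₁ − x₂` and `w₁ − w₂` converge to zero
as `t → ∞`. -/
theorem coupled_vdp_synchronization
    (μ K : ℝ) (hμ : 0 < μ) (hK : 0 < K) (hKμ : μ < 2 * K)
    (x₁ w₁ x₂ w₂ : ℝ → ℝ)
    (hx₁ : ∀ t ∈ Ici (0 : ℝ), HasDerivAt x₁
      (-w₁ t + μ * (x₁ t - (x₁ t) ^ 3 / 3) + K * (x₂ t - x₁ t)) t)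
    (hw₁ : ∀ t ∈ Ici (0 : ℝ), HasDerivAt w₁ (x₁ t) t)
    (hx₂ : ∀ t ∈ Ici (0 : ℝ), HasDerivAt x₂
      (-w₂ t + μ * (x₂ t - (x₂ t) ^ 3 / 3) + K * (x₁ t - x₂ t)) t)
    (hw₂ : ∀ t ∈ Ici (0 : ℝ), HasDerivAt w₂ (x₂ t) t) :
    Tendsto (fun t => x₁ t - x₂ t) atTop (nhds 0) ∧
    Tendsto (fun t => w₁ t - w₂ t) atTop (nhds 0) := by
  have cx₁ : ContinuousOn x₁ (Ici 0) := fun t ht => (hx₁ t ht).continuousAt.continuousWithinAt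
  have cx₂ : ContinuousOn x₂ (Ici 0) := fun t ht => (hx₂ t ht).continuousAt.continuousWithinAt
  -- energy of the full system and its linear growth
  have hE : ∀ t ∈ Ici (0:ℝ), HasDerivAt
      (fun t => (x₁ t*x₁ t + w₁ t*w₁ t + x₂ t*x₂ t + w₂ t*w₂ t)/2)
      (μ*(x₁ t^2 - x₁ t^4/3) + μ*(x₂ t^2 - x₂ t^4/3) - K*(x₁ t - x₂ t)^2) t := by
    intro t ht
    have h1 := ((((hx₁ t ht).mul (hx₁ t ht)).add ((hw₁ t ht).mul (hw₁ t ht))).add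
      ((hx₂ t ht).mul (hx₂ t ht))).add ((hw₂ t ht).mul (hw₂ t ht)) |>.div_const 2
    refine h1.congr_deriv ?_
    ring
  have hganti : AntitoneOn
      (fun t => (x₁ t*x₁ t + w₁ t*w₁ t + x₂ t*x₂ t + w₂ t*w₂ t)/2 - 3*μ/2*t) (Ici 0) := by
    have hg : ∀ t ∈ Ici (0:ℝ), HasDerivAt
        (fun t => (x₁ t*x₁ t + w₁ t*w₁ t + x₂ t*x₂ t + w₂ t*w₂ t)/2 - 3*μ/2*t)
        ((μ*(x₁ t^2 - x₁ t^4/3) + μ*(x₂ t^2 - x₂ t^4/3) - K*(x₁ t - x₂ t)^2) - 3*μ/2) t := by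
      intro t ht
      exact (hE t ht).sub (by simpa using (hasDerivAt_id t).const_mul (3*μ/2))
    apply antitoneOn_of_deriv_nonpos (convex_Ici 0)
      (fun t ht => (hg t ht).continuousAt.continuousWithinAt)
    · rw [interior_Ici]
      exact fun t ht => (hg t (mem_Ici.mpr (mem_Ioi.mp ht).le)).differentiableAt.differentiableWithinAt
    · rw [interior_Ici]
      intro t ht
      rw [(hg t (mem_Ici.mpr (mem_Ioi.mp ht).le)).deriv]
      nlinarith [sq_nonneg (2*x₁ t^2 - 3), sq_nonneg (2*x₂ t^2 - 3),
        sq_nonneg (x₁ t - x₂ t), hμ.le, hK.le,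
        mul_nonneg hK.le (sq_nonneg (x₁ t - x₂ t)),
        mul_nonneg hμ.le (sq_nonneg (2*x₁ t^2 - 3)),
        mul_nonneg hμ.le (sq_nonneg (2*x₂ t^2 - 3))]
  have hEbound : ∀ t ∈ Ici (0:ℝ),
      (x₁ t*x₁ t + w₁ t*w₁ t + x₂ t*x₂ t + w₂ t*w₂ t)/2 ≤
      (x₁ 0*x₁ 0 + w₁ 0*w₁ 0 + x₂ 0*x₂ 0 + w₂ 0*w₂ 0)/2 + 3*μ/2*t := by
    intro t ht
    have := hganti self_mem_Ici ht ht
    simp only at this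
    linarith
  -- constants
  have hE0 : (0:ℝ) ≤ (x₁ 0*x₁ 0 + w₁ 0*w₁ 0 + x₂ 0*x₂ 0 + w₂ 0*w₂ 0)/2 := by
    nlinarith [mul_self_nonneg (x₁ 0), mul_self_nonneg (w₁ 0),
      mul_self_nonneg (x₂ 0), mul_self_nonneg (w₂ 0)]
  refine damped_osc_conv (2*K - μ)
    (2*K - μ + μ * ((x₁ 0*x₁ 0 + w₁ 0*w₁ 0 + x₂ 0*x₂ 0 + w₂ 0*w₂ 0)/2)) (3*μ^2/2)
    (by linarith) (by nlinarith [mul_nonneg hμ.le hE0]) (by positivity)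
    (fun t => x₁ t - x₂ t) (fun t => w₁ t - w₂ t)
    (fun t => 2*K - μ + μ/3 * (x₁ t*x₁ t + x₁ t*x₂ t + x₂ t*x₂ t))
    ?_ ?_ ?_ ?_ ?_
  · -- continuity of h
    apply ContinuousOn.add continuousOn_const
    apply ContinuousOn.mul continuousOn_const
    exact ((cx₁.mul cx₁).add (cx₁.mul cx₂)).add (cx₂.mul cx₂)
  · -- lower bound
    intro t ht
    nlinarith [sq_nonneg (x₁ t + x₂ t), sq_nonneg (x₁ t - x₂ t), hμ.le]
  · -- upper bound
    intro t ht
    have h1 := hEbound t ht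
    have hq3 : x₁ t*x₁ t + x₁ t*x₂ t + x₂ t*x₂ t ≤
        3 * ((x₁ t*x₁ t + w₁ t*w₁ t + x₂ t*x₂ t + w₂ t*w₂ t)/2) := by
      nlinarith [sq_nonneg (x₁ t - x₂ t), mul_self_nonneg (w₁ t), mul_self_nonneg (w₂ t)]
    have h2 : μ/3 * (x₁ t*x₁ t + x₁ t*x₂ t + x₂ t*x₂ t) ≤
        μ/3 * (3*((x₁ 0*x₁ 0 + w₁ 0*w₁ 0 + x₂ 0*x₂ 0 + w₂ 0*w₂ 0)/2 + 3*μ/2*t)) :=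
      mul_le_mul_of_nonneg_left (le_trans hq3 (by linarith)) (by positivity)
    nlinarith [h2]
  · -- derivative of e
    intro t ht
    have h1 := (hx₁ t ht).sub (hx₂ t ht)
    refine h1.congr_deriv ?_
    ring
  · -- derivative of η
    intro t ht
    have h1 := (hw₁ t ht).sub (hw₂ t ht)
    exact h1
end

section
/- Let μ > 0, let (x₁, w₁, u₁) and (x₂, w₂, u₂) be two differentiable input–state trajectories of the open van der Pol system ẋᵢ = −wᵢ + μ(xᵢ − xᵢ³/3) + uᵢ, ẇᵢ = xᵢ, yᵢ = xᵢ, and define the incremental variables Δx = x₁ − x₂, Δw = w₁ − w₂, Δu = u₁ − u₂, Δy = y₁ − y₂ and the incremental storage ΔS(t) = ½(Δx(t)² + Δw(t)²). Then for all t, (d/dt)ΔS(t) ≤ μ·Δy(t)² + Δu(t)·Δy(t); that is, the van der Pol oscillator is incrementally passive up to a shortage of passivity μ·Δy². -/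
open Real Set

/-- Theorem (incremental passivity of the van der Pol oscillator): along any
two input–state trajectories of the open van der Pol system
`ẋ = −w + μ(x − x³/3) + u`, `ẇ = x`, `y = x`, the incremental storage
`ΔS = ½(Δx² + Δw²)` satisfies the incremental dissipation inequality
`(d/dt)ΔS ≤ μΔy² + ΔuΔy` (shortage of incremental passivity `μΔy²`). -/
theorem vdp_incremental_passivity
    (μ : ℝ) (hμ : 0 < μ)
    (x₁ w₁ u₁ x₂ w₂ u₂ : ℝ → ℝ)
    (hx₁ : ∀ t : ℝ, HasDerivAt x₁ (-w₁ t + μ * (x₁ t - (x₁ t) ^ 3 / 3) + u₁ t) t)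
    (hw₁ : ∀ t : ℝ, HasDerivAt w₁ (x₁ t) t)
    (hx₂ : ∀ t : ℝ, HasDerivAt x₂ (-w₂ t + μ * (x₂ t - (x₂ t) ^ 3 / 3) + u₂ t) t)
    (hw₂ : ∀ t : ℝ, HasDerivAt w₂ (x₂ t) t) :
    ∀ t : ℝ, ∃ d : ℝ,
      HasDerivAt (fun s => (1 / 2) * ((x₁ s - x₂ s) ^ 2 + (w₁ s - w₂ s) ^ 2)) d t ∧
      d ≤ μ * (x₁ t - x₂ t) ^ 2 + (u₁ t - u₂ t) * (x₁ t - x₂ t) := by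
  intro t
  have hdx : HasDerivAt (fun s => x₁ s - x₂ s)
      ((-w₁ t + μ * (x₁ t - (x₁ t) ^ 3 / 3) + u₁ t)
        - (-w₂ t + μ * (x₂ t - (x₂ t) ^ 3 / 3) + u₂ t)) t := (hx₁ t).sub (hx₂ t)
  have hdw : HasDerivAt (fun s => w₁ s - w₂ s) (x₁ t - x₂ t) t := (hw₁ t).sub (hw₂ t)
  have hS : HasDerivAt (fun s => (1 / 2) * ((x₁ s - x₂ s) ^ 2 + (w₁ s - w₂ s) ^ 2))
      ((1 / 2) * (2 * (x₁ t - x₂ t) * ((-w₁ t + μ * (x₁ t - (x₁ t) ^ 3 / 3) + u₁ t)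
        - (-w₂ t + μ * (x₂ t - (x₂ t) ^ 3 / 3) + u₂ t))
        + 2 * (w₁ t - w₂ t) * (x₁ t - x₂ t))) t := by
    have h1 := (hdx.pow 2).add (hdw.pow 2)
    have := h1.const_mul ((1:ℝ)/2)
    convert this using 1
    · rfl
    · rfl
    · rfl
    · norm_num
  refine ⟨_, hS, ?_⟩
  nlinarith [sq_nonneg (x₁ t - x₂ t), sq_nonneg (x₁ t + x₂ t),
    mul_nonneg hμ.le (mul_nonneg (sq_nonneg (x₁ t - x₂ t)) (sq_nonneg (x₁ t + x₂ t))),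
    mul_nonneg hμ.le (mul_nonneg (sq_nonneg (x₁ t - x₂ t)) (sq_nonneg (x₁ t))),
    mul_nonneg hμ.le (mul_nonneg (sq_nonneg (x₁ t - x₂ t)) (sq_nonneg (x₂ t)))]
end
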